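/- arXiv:1903.02254 — 3 statements merged into one kernel-verified Lean document; each statement's English description precedes it below -/
import Mathlib

section
/- Let α, β ∈ ℂ with |α| = |β| = 1. Then the Radford algebra H admits a *-structure (making H a Hopf *-algebra) uniquely determined by g* = g, x* = αx, y* = βy; that is, there exists a conjugate-linear map * : H → H with (h*)* = h, (hl)* = l*h*, Δ(h*) = Σ (h₁)* ⊗ (h₂)*, and S(S(h*)*) = h for all h, l ∈ H, satisfying g* = g, x* = αx, y* = βy. -/
open TensorProduct

noncomputable section

/-- The Gaussian (`q`-)binomial coefficient `C(m, k)_q`, defined by the `q`-Pascal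
recurrence `C(m+1, k+1)_q = C(m, k)_q + q^(k+1) * C(m, k+1)_q`. -/
def qBinom (q : ℂ) : ℕ → ℕ → ℂ
  | _, 0 => 1
  | 0, _ + 1 => 0
  | m + 1, k + 1 => qBinom q m k + q ^ (k + 1) * qBinom q m (k + 1)

/-- The Radford algebra: a Hopf algebra `H` over `ℂ` generated by elements
`g, x, y` subject to the relations `g^n = 1`, `x^n = y^n = 0`, `xg = ω g x`,
`g y = ω y g`, `x y = ω y x`, where `ω` is a root of unity of order `n > 1`,
with the comultiplication, counit and antipode determined by
`Δ(g) = g ⊗ g`, `ε(g) = 1`, `S(g) = g^(n-1)`,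
`Δ(x) = x ⊗ g + 1 ⊗ x`, `ε(x) = 0`, `S(x) = -x g^(n-1)`,
`Δ(y) = y ⊗ g + 1 ⊗ y`, `ε(y) = 0`, `S(y) = -y g^(n-1)`,
and with canonical `ℂ`-basis `{y^r x^s g^l | 0 ≤ r, s, l < n}`. -/
structure RadfordAlgebra (n : ℕ) (ω : ℂ) (H : Type*) [Ring H] [HopfAlgebra ℂ H] where
  g : H
  x : H
  y : H
  hn : 1 < n
  hω : IsPrimitiveRoot ω n
  g_pow : g ^ n = 1
  x_pow : x ^ n = 0
  y_pow : y ^ n = 0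
  rel_xg : x * g = ω • (g * x)
  rel_gy : g * y = ω • (y * g)
  rel_xy : x * y = ω • (y * x)
  comul_g : Coalgebra.comul (R := ℂ) g = g ⊗ₜ[ℂ] g
  counit_g : Coalgebra.counit (R := ℂ) g = 1
  antipode_g : HopfAlgebra.antipode (R := ℂ) g = g ^ (n - 1)
  comul_x : Coalgebra.comul (R := ℂ) x = x ⊗ₜ[ℂ] g + 1 ⊗ₜ[ℂ] x
  counit_x : Coalgebra.counit (R := ℂ) x = 0
  antipode_x : HopfAlgebra.antipode (R := ℂ) x = -(x * g ^ (n - 1))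
  comul_y : Coalgebra.comul (R := ℂ) y = y ⊗ₜ[ℂ] g + 1 ⊗ₜ[ℂ] y
  counit_y : Coalgebra.counit (R := ℂ) y = 0
  antipode_y : HopfAlgebra.antipode (R := ℂ) y = -(y * g ^ (n - 1))
  gen : Algebra.adjoin ℂ ({g, x, y} : Set H) = ⊤
  basis : Module.Basis (Fin n × Fin n × Fin n) ℂ H
  basis_eq : ∀ r s l : Fin n, basis (r, s, l) = y ^ (r : ℕ) * x ^ (s : ℕ) * g ^ (l : ℕ)

/-- A `*`-structure on a Hopf algebra `H` over `ℂ`: a conjugate-linear map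
`* : H → H` such that `(h*)* = h`, `(hl)* = l* h*`,
`Δ(h*) = Σ (h₁)* ⊗ (h₂)*` and `S(S(h*)*) = h` for all `h, l ∈ H`.
(The condition on `Δ` is expressed via the auxiliary additive map `starTensor`
on `H ⊗[ℂ] H` sending `a ⊗ b` to `a* ⊗ b*`, which is uniquely determined by
its two defining properties.) -/
structure HopfStarStructure (H : Type*) [Ring H] [HopfAlgebra ℂ H] where
  star : H → H
  star_add : ∀ a b : H, star (a + b) = star a + star b
  star_smul : ∀ (c : ℂ) (a : H), star (c • a) = (starRingEnd ℂ c) • star a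
  star_star : ∀ a : H, star (star a) = a
  star_mul : ∀ a b : H, star (a * b) = star b * star a
  starTensor : H ⊗[ℂ] H → H ⊗[ℂ] H
  starTensor_add : ∀ u v : H ⊗[ℂ] H, starTensor (u + v) = starTensor u + starTensor v
  starTensor_tmul : ∀ a b : H, starTensor (a ⊗ₜ[ℂ] b) = star a ⊗ₜ[ℂ] star b
  comul_star : ∀ a : H,
    Coalgebra.comul (R := ℂ) (star a) = starTensor (Coalgebra.comul (R := ℂ) a)
  antipode_star : ∀ a : H,
    HopfAlgebra.antipode (R := ℂ) (star (HopfAlgebra.antipode (R := ℂ) (star a))) = a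

/-- Two `*`-structures `*'` and `*''` on a Hopf algebra `H` over `ℂ` are
equivalent if there is a Hopf algebra automorphism `ψ` of `H` such that
`ψ(h^{*'}) = ψ(h)^{*''}` for all `h ∈ H`. -/
def HopfStarStructure.Equivalent {H : Type*} [Ring H] [HopfAlgebra ℂ H]
    (s₁ s₂ : HopfStarStructure H) : Prop :=
  ∃ ψ : H ≃ₐc[ℂ] H, ∀ h : H, ψ (s₁.star h) = s₂.star (ψ h)

namespace RadfordStarAux

lemma pow_mod_eq {M : Type*} [Monoid M] {u : M} {n : ℕ} (hu : u ^ n = 1) (a : ℕ) :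
    u ^ a = u ^ (a % n) := by
  conv_lhs => rw [← Nat.div_add_mod a n]
  rw [pow_add, pow_mul, hu, one_pow, one_mul]

lemma pow_congr {M : Type*} [Monoid M] {u : M} {n : ℕ} (hu : u ^ n = 1) {a b : ℕ}
    (h : a % n = b % n) : u ^ a = u ^ b := by
  rw [pow_mod_eq hu a, pow_mod_eq hu b, h]

section
variable {H : Type*} [Ring H] [Algebra ℂ H]

lemma comm_pow₁ {a b : H} {c : ℂ} (hab : a * b = c • (b * a)) (k : ℕ) :
    a * b ^ k = c ^ k • (b ^ k * a) := by
  induction k with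
  | zero => simp
  | succ k ih =>
      calc a * b ^ (k + 1) = (a * b ^ k) * b := by rw [pow_succ, mul_assoc]
      _ = c ^ k • (b ^ k * a * b) := by rw [ih, smul_mul_assoc]
      _ = c ^ k • (b ^ k * (c • (b * a))) := by rw [mul_assoc, hab]
      _ = c ^ (k + 1) • (b ^ (k + 1) * a) := by
            rw [mul_smul_comm, smul_smul, ← mul_assoc, ← pow_succ, ← pow_succ]

lemma comm_pow₂ {a b : H} {c : ℂ} (hab : a * b = c • (b * a)) (k : ℕ) :
    a ^ k * b = c ^ k • (b * a ^ k) := by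
  induction k with
  | zero => simp
  | succ k ih =>
      calc a ^ (k + 1) * b = a * (a ^ k * b) := by rw [pow_succ', mul_assoc]
      _ = c ^ k • (a * (b * a ^ k)) := by rw [ih, mul_smul_comm]
      _ = c ^ k • ((a * b) * a ^ k) := by rw [mul_assoc]
      _ = c ^ (k + 1) • (b * a ^ (k + 1)) := by
            rw [hab, smul_mul_assoc, smul_smul, mul_assoc, ← pow_succ', ← pow_succ]

lemma smul_invert {u v : H} {c c' : ℂ} (hc : c' * c = 1) (h : u = c • v) : v = c' • u := by
  rw [h, smul_smul, hc, one_smul]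

end

lemma habs_one_conj {z : ℂ} (hz : ‖z‖ = 1) : (starRingEnd ℂ) z = z⁻¹ :=
  (Complex.inv_eq_conj hz).symm

lemma habs_one_ne {z : ℂ} (hz : ‖z‖ = 1) : z ≠ 0 := by
  intro h; rw [h] at hz; simp at hz

lemma habs_of_pow_eq_one {n : ℕ} {ω : ℂ} (hn : n ≠ 0) (h : ω ^ n = 1) : ‖ω‖ = 1 := by
  have h1 : ‖ω‖ ^ n = 1 := by rw [← norm_pow, h, norm_one]
  have h0 : (0:ℝ) ≤ ‖ω‖ := norm_nonneg _
  rcases lt_trichotomy (‖ω‖) 1 with hlt | heq | hgt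
  · exact absurd h1 (by have := pow_lt_one₀ h0 hlt hn; linarith)
  · exact heq
  · exact absurd h1 (by have := one_lt_pow₀ hgt hn; linarith)

section
variable {n : ℕ} {ω : ℂ} {H : Type*} [Ring H] [HopfAlgebra ℂ H]

lemma hn0 (R : RadfordAlgebra n ω H) : n ≠ 0 := by have := R.hn; omega

lemma homega_pow (R : RadfordAlgebra n ω H) : ω ^ n = 1 := R.hω.pow_eq_one

lemma habs_omega (R : RadfordAlgebra n ω H) : ‖ω‖ = 1 :=
  habs_of_pow_eq_one (hn0 R) (homega_pow R)

lemma homega_ne (R : RadfordAlgebra n ω H) : ω ≠ 0 := habs_one_ne (habs_omega R)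

lemma hconj_omega (R : RadfordAlgebra n ω H) : (starRingEnd ℂ) ω = ω⁻¹ :=
  habs_one_conj (habs_omega R)

lemma hinv_pow_one (R : RadfordAlgebra n ω H) : (ω⁻¹) ^ n = 1 := by
  rw [inv_pow, homega_pow R, inv_one]

lemma hconj_omega_inv (R : RadfordAlgebra n ω H) : (starRingEnd ℂ) ω⁻¹ = ω := by
  rw [map_inv₀, hconj_omega R, inv_inv]

/-- `(ω⁻¹)^((n-1)*k) = ω^k`. -/
lemma hinv_nsub_pow (R : RadfordAlgebra n ω H) (k : ℕ) : (ω⁻¹) ^ ((n-1)*k) = ω ^ k := by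
  have h : ω ^ ((n-1)*k) * ω ^ k = 1 := by
    rw [← pow_add]
    have h1 : (n-1)*k + k = n * k := by
      have h2 : (n-1) + 1 = n := by have := R.hn; omega
      calc (n-1)*k + k = ((n-1)+1)*k := by ring
      _ = n * k := by rw [h2]
    rw [h1, pow_mul, homega_pow R, one_pow]
  rw [inv_pow]
  exact inv_eq_of_mul_eq_one_right h

/-- `ω^((n-1)*k) = (ω⁻¹)^k`. -/
lemma homega_nsub_pow (R : RadfordAlgebra n ω H) (k : ℕ) : ω ^ ((n-1)*k) = (ω⁻¹) ^ k := by
  have h : ω ^ ((n-1)*k) * ω ^ k = 1 := by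
    rw [← pow_add]
    have h1 : (n-1)*k + k = n * k := by
      have h2 : (n-1) + 1 = n := by have := R.hn; omega
      calc (n-1)*k + k = ((n-1)+1)*k := by ring
      _ = n * k := by rw [h2]
    rw [h1, pow_mul, homega_pow R, one_pow]
  rw [inv_pow]
  exact eq_inv_of_mul_eq_one_left h

variable (R : RadfordAlgebra n ω H)

/-- Normal form monomial. -/
def Bn (r s l : ℕ) : H := R.y ^ r * R.x ^ s * R.g ^ l

-- commutation lemmas
lemma g_ypow (r : ℕ) : R.g * R.y ^ r = ω ^ r • (R.y ^ r * R.g) := comm_pow₁ R.rel_gy r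
lemma gpow_y (l : ℕ) : R.g ^ l * R.y = ω ^ l • (R.y * R.g ^ l) := comm_pow₂ R.rel_gy l
lemma x_ypow (r : ℕ) : R.x * R.y ^ r = ω ^ r • (R.y ^ r * R.x) := comm_pow₁ R.rel_xy r
lemma xpow_y (s : ℕ) : R.x ^ s * R.y = ω ^ s • (R.y * R.x ^ s) := comm_pow₂ R.rel_xy s
lemma x_gpow (l : ℕ) : R.x * R.g ^ l = ω ^ l • (R.g ^ l * R.x) := comm_pow₁ R.rel_xg l
lemma xpow_g (s : ℕ) : R.x ^ s * R.g = ω ^ s • (R.g * R.x ^ s) := comm_pow₂ R.rel_xg s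

lemma inv_pow_cancel (R : RadfordAlgebra n ω H) (k : ℕ) : (ω⁻¹) ^ k * ω ^ k = 1 := by
  rw [inv_pow, inv_mul_cancel₀ (pow_ne_zero k (homega_ne R))]

lemma pow_inv_cancel (R : RadfordAlgebra n ω H) (k : ℕ) : ω ^ k * (ω⁻¹) ^ k = 1 := by
  rw [inv_pow, mul_inv_cancel₀ (pow_ne_zero k (homega_ne R))]

lemma gpow_x (l : ℕ) : R.g ^ l * R.x = (ω⁻¹) ^ l • (R.x * R.g ^ l) :=
  smul_invert (inv_pow_cancel R l) (x_gpow R l)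

lemma g_xpow (s : ℕ) : R.g * R.x ^ s = (ω⁻¹) ^ s • (R.x ^ s * R.g) :=
  smul_invert (inv_pow_cancel R s) (xpow_g R s)

-- Left multiplication by generators on normal-form monomials
lemma M_y (r s l : ℕ) : R.y * Bn R r s l = Bn R (r+1) s l := by
  unfold Bn
  rw [← mul_assoc, ← mul_assoc, ← pow_succ']

lemma M_x (r s l : ℕ) : R.x * Bn R r s l = ω ^ r • Bn R r (s+1) l := by
  unfold Bn
  calc R.x * (R.y ^ r * R.x ^ s * R.g ^ l) = (R.x * R.y ^ r) * R.x ^ s * R.g ^ l := by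
        rw [mul_assoc, mul_assoc, mul_assoc]
  _ = (ω ^ r • (R.y ^ r * R.x)) * R.x ^ s * R.g ^ l := by rw [x_ypow]
  _ = ω ^ r • (R.y ^ r * R.x ^ (s+1) * R.g ^ l) := by
        rw [smul_mul_assoc, smul_mul_assoc]
        congr 1
        rw [show R.x ^ (s+1) = R.x * R.x ^ s from pow_succ' R.x s]
        noncomm_ring

lemma M_g (r s l : ℕ) :
    R.g * Bn R r s l = (ω ^ r * (ω⁻¹) ^ s) • Bn R r s (l+1) := by
  unfold Bn
  calc R.g * (R.y ^ r * R.x ^ s * R.g ^ l) = (R.g * R.y ^ r) * (R.x ^ s * R.g ^ l) := by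
        rw [mul_assoc, mul_assoc]
  _ = ω ^ r • (R.y ^ r * (R.g * (R.x ^ s * R.g ^ l))) := by
        rw [g_ypow, smul_mul_assoc, mul_assoc]
  _ = ω ^ r • (R.y ^ r * (((ω⁻¹) ^ s • (R.x ^ s * R.g)) * R.g ^ l)) := by
        rw [← mul_assoc (R.g), g_xpow]
  _ = (ω ^ r * (ω⁻¹) ^ s) • (R.y ^ r * R.x ^ s * R.g ^ (l+1)) := by
        rw [smul_mul_assoc, mul_smul_comm, smul_smul, mul_assoc (R.x ^ s), ← pow_succ',
          mul_assoc]

-- Right multiplication by generators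
lemma N_g (r s l : ℕ) : Bn R r s l * R.g = Bn R r s (l+1) := by
  unfold Bn; rw [mul_assoc, ← pow_succ]

lemma N_gp (r s l k : ℕ) : Bn R r s l * R.g ^ k = Bn R r s (l+k) := by
  unfold Bn; rw [mul_assoc, ← pow_add]

lemma N_x (r s l : ℕ) : Bn R r s l * R.x = (ω⁻¹) ^ l • Bn R r (s+1) l := by
  unfold Bn
  calc R.y ^ r * R.x ^ s * R.g ^ l * R.x = R.y ^ r * R.x ^ s * (R.g ^ l * R.x) := by
        rw [mul_assoc]
  _ = (ω⁻¹) ^ l • (R.y ^ r * R.x ^ s * (R.x * R.g ^ l)) := by rw [gpow_x, mul_smul_comm]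
  _ = (ω⁻¹) ^ l • (R.y ^ r * R.x ^ (s+1) * R.g ^ l) := by
        rw [← mul_assoc, mul_assoc (R.y ^ r), ← pow_succ]

lemma N_y (r s l : ℕ) : Bn R r s l * R.y = (ω ^ l * ω ^ s) • Bn R (r+1) s l := by
  unfold Bn
  calc R.y ^ r * R.x ^ s * R.g ^ l * R.y = R.y ^ r * R.x ^ s * (R.g ^ l * R.y) := by
        rw [mul_assoc]
  _ = ω ^ l • (R.y ^ r * (R.x ^ s * R.y) * R.g ^ l) := by
        rw [gpow_y, mul_smul_comm, ← mul_assoc, mul_assoc (R.y ^ r)]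
  _ = (ω ^ l * ω ^ s) • (R.y ^ r * (R.y * R.x ^ s) * R.g ^ l) := by
        rw [xpow_y, mul_smul_comm, smul_mul_assoc, smul_smul]
  _ = (ω ^ l * ω ^ s) • (R.y ^ (r+1) * R.x ^ s * R.g ^ l) := by
        rw [← mul_assoc, ← pow_succ]

-- vanishing for large exponents
lemma Bn_zero_of_r (r s l : ℕ) (hr : n ≤ r) : Bn R r s l = 0 := by
  unfold Bn
  have : R.y ^ r = 0 := by
    calc R.y ^ r = R.y ^ n * R.y ^ (r - n) := by rw [← pow_add]; congr 1; omega
    _ = 0 := by rw [R.y_pow, zero_mul]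
  rw [this, zero_mul, zero_mul]

lemma Bn_zero_of_s (r s l : ℕ) (hs : n ≤ s) : Bn R r s l = 0 := by
  unfold Bn
  have : R.x ^ s = 0 := by
    calc R.x ^ s = R.x ^ n * R.x ^ (s - n) := by rw [← pow_add]; congr 1; omega
    _ = 0 := by rw [R.x_pow, zero_mul]
  rw [this, mul_zero, zero_mul]

lemma Bn_mod (r s l : ℕ) : Bn R r s l = Bn R r s (l % n) := by
  unfold Bn
  rw [pow_mod_eq R.g_pow l]

lemma Bn_basis (r s l : Fin n) : R.basis (r, s, l) = Bn R r s l := R.basis_eq r s l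

-- ============ the conjugate-linear star map ============

/-- coefficient of the star map on basis monomials -/
def dc (ω α β : ℂ) (r s l : ℕ) : ℂ := β ^ r * α ^ s * ω ^ ((l + s) * r) * (ω⁻¹) ^ (l * s)

/-- The star map, defined diagonally w.r.t. the basis. -/
def starF (R : RadfordAlgebra n ω H) (α β : ℂ) : H → H := fun h =>
  ∑ p : Fin n × Fin n × Fin n,
    ((starRingEnd ℂ) (R.basis.repr h p) * dc ω α β p.1 p.2.1 p.2.2) • R.basis p

variable (α β : ℂ)

lemma starF_add (u v : H) : starF R α β (u + v) = starF R α β u + starF R α β v := by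
  unfold starF
  rw [← Finset.sum_add_distrib]
  refine Finset.sum_congr rfl fun p _ => ?_
  rw [map_add, Finsupp.add_apply, map_add, add_mul, add_smul]

lemma starF_smul (c : ℂ) (u : H) :
    starF R α β (c • u) = (starRingEnd ℂ) c • starF R α β u := by
  unfold starF
  rw [Finset.smul_sum]
  refine Finset.sum_congr rfl fun p _ => ?_
  rw [map_smul, Finsupp.smul_apply, smul_eq_mul, map_mul, smul_smul, mul_assoc]

lemma starF_zero : starF R α β 0 = 0 := by
  have := starF_smul R α β 0 0
  simpa using this

lemma starF_basis (p : Fin n × Fin n × Fin n) :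
    starF R α β (R.basis p) = dc ω α β p.1 p.2.1 p.2.2 • R.basis p := by
  unfold starF
  rw [Finset.sum_eq_single p]
  · rw [Module.Basis.repr_self, Finsupp.single_apply, if_pos rfl, map_one, one_mul]
  · intro q _ hq
    rw [Module.Basis.repr_self, Finsupp.single_apply, if_neg (by exact fun h => hq h.symm), map_zero,
      zero_mul, zero_smul]
  · intro h; exact absurd (Finset.mem_univ p) h

/-- Extension principle: two additive, `σ`-semilinear maps agreeing on a basis agree. -/
lemma ext_basis {ιt : Type*} [Fintype ιt] {M N : Type*} [AddCommGroup M] [Module ℂ M]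
    [AddCommGroup N] [Module ℂ N] (b : Module.Basis ιt ℂ M) (σ : ℂ →+* ℂ) (f f' : M → N)
    (hfa : ∀ u v, f (u + v) = f u + f v) (hfs : ∀ (c : ℂ) (u : M), f (c • u) = σ c • f u)
    (hga : ∀ u v, f' (u + v) = f' u + f' v) (hgs : ∀ (c : ℂ) (u : M), f' (c • u) = σ c • f' u)
    (hb : ∀ p, f (b p) = f' (b p)) (m : M) : f m = f' m := by
  have key : ∀ (h : M → N), (∀ u v, h (u + v) = h u + h v) →
      (∀ (c : ℂ) (u : M), h (c • u) = σ c • h u) →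
      h m = ∑ i, σ (b.repr m i) • h (b i) := by
    intro h ha hs
    conv_lhs => rw [← b.sum_repr m]
    calc h (∑ i, b.repr m i • b i) = ∑ i, h (b.repr m i • b i) :=
      map_sum (AddMonoidHom.mk' h ha) _ _
    _ = ∑ i, σ (b.repr m i) • h (b i) := Finset.sum_congr rfl fun i _ => hs _ _
  rw [key f hfa hfs, key f' hga hgs]
  exact Finset.sum_congr rfl fun i _ => by rw [hb]

/-- Master formula for `starF` on arbitrary monomials. -/
lemma starF_master (r s l : ℕ) :
    starF R α β (Bn R r s l) = dc ω α β r s l • Bn R r s l := by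
  by_cases hr : r < n; swap
  · rw [Bn_zero_of_r R r s l (le_of_not_gt hr), starF_zero, smul_zero]
  by_cases hs : s < n; swap
  · rw [Bn_zero_of_s R r s l (le_of_not_gt hs), starF_zero, smul_zero]
  have hl : l % n < n := Nat.mod_lt _ (Nat.pos_of_ne_zero (hn0 R))
  have hb := starF_basis R α β (⟨r, hr⟩, ⟨s, hs⟩, ⟨l % n, hl⟩)
  rw [Bn_basis] at hb
  simp only [Fin.val_mk] at hb
  have hmod : l % n % n = l % n := Nat.mod_mod_of_dvd _ dvd_rfl
  have hdc : dc ω α β r s l = dc ω α β r s (l % n) := by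
    unfold dc
    rw [pow_congr (homega_pow R) (Nat.ModEq.symm (((Nat.mod_modEq l n).add_right s).mul_right r)),
      pow_congr (hinv_pow_one R) (Nat.ModEq.symm ((Nat.mod_modEq l n).mul_right s))]
  rw [Bn_mod R r s l, hb, hdc]

lemma Bn_one : Bn R 0 0 0 = (1:H) := by simp [Bn]
lemma Bn_g : Bn R 0 0 1 = R.g := by simp [Bn]
lemma Bn_x : Bn R 0 1 0 = R.x := by simp [Bn]
lemma Bn_y : Bn R 1 0 0 = R.y := by simp [Bn]

lemma starF_one : starF R α β 1 = 1 := by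
  rw [← Bn_one R, starF_master]; simp [dc, Bn]

lemma starF_g : starF R α β R.g = R.g := by
  rw [← Bn_g R, starF_master]; simp [dc, Bn]

lemma starF_x : starF R α β R.x = α • R.x := by
  rw [← Bn_x R, starF_master]; simp [dc, Bn]

lemma starF_y : starF R α β R.y = β • R.y := by
  rw [← Bn_y R, starF_master]; simp [dc, Bn]

lemma dc_conj_mul {ω α β : ℂ} (hω : ‖ω‖ = 1) (hα : ‖α‖ = 1)
    (hβ : ‖β‖ = 1) (r s l : ℕ) :
    (starRingEnd ℂ) (dc ω α β r s l) * dc ω α β r s l = 1 := by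
  have hαne := habs_one_ne hα
  have hβne := habs_one_ne hβ
  have hωne := habs_one_ne hω
  have hconj_inv : (starRingEnd ℂ) ω⁻¹ = ω := by rw [map_inv₀, habs_one_conj hω, inv_inv]
  simp only [dc, map_mul, map_pow, habs_one_conj hω, hconj_inv, habs_one_conj hα,
    habs_one_conj hβ]
  field_simp
  simp only [one_div, inv_pow]
  field_simp

lemma starF_starF (hα : ‖α‖ = 1) (hβ : ‖β‖ = 1) (h : H) : starF R α β (starF R α β h) = h := by
  refine ext_basis R.basis (RingHom.id ℂ) (fun u => starF R α β (starF R α β u)) id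
    ?_ ?_ (fun _ _ => rfl) (fun _ _ => by simp) ?_ h
  · intro u v; rw [starF_add, starF_add]
  · intro c u; rw [starF_smul, starF_smul, Complex.conj_conj]; rfl
  · intro p
    rw [starF_basis, starF_smul, starF_basis, smul_smul,
      dc_conj_mul (habs_omega R) hα hβ, one_smul, id]

lemma starF_P_g (h : H) : starF R α β (R.g * h) = starF R α β h * starF R α β R.g := by
  rw [starF_g]
  refine ext_basis R.basis (starRingEnd ℂ) (fun u => starF R α β (R.g * u))
    (fun u => starF R α β u * R.g) ?_ ?_ ?_ ?_ ?_ h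
  · intro u v; rw [mul_add, starF_add]
  · intro c u; rw [mul_smul_comm, starF_smul]
  · intro u v; rw [starF_add, add_mul]
  · intro c u; rw [starF_smul, smul_mul_assoc]
  · rintro ⟨r, s, l⟩
    rw [Bn_basis, M_g, starF_smul, starF_master, starF_master, smul_mul_assoc, N_g, smul_smul]
    congr 1
    have hωne := homega_ne R
    simp only [dc, map_mul, map_pow, hconj_omega R, hconj_omega_inv R]
    field_simp
    simp only [one_div, inv_pow]
    field_simp
    ring

lemma starF_P_x (h : H) : starF R α β (R.x * h) = starF R α β h * starF R α β R.x := by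
  rw [starF_x]
  refine ext_basis R.basis (starRingEnd ℂ) (fun u => starF R α β (R.x * u))
    (fun u => starF R α β u * (α • R.x)) ?_ ?_ ?_ ?_ ?_ h
  · intro u v; rw [mul_add, starF_add]
  · intro c u; rw [mul_smul_comm, starF_smul]
  · intro u v; rw [starF_add, add_mul]
  · intro c u; rw [starF_smul, smul_mul_assoc]
  · rintro ⟨r, s, l⟩
    rw [Bn_basis, M_x, starF_smul, starF_master, starF_master, mul_smul_comm, smul_mul_assoc,
      N_x, smul_smul, smul_smul, smul_smul]
    congr 1
    have hωne := homega_ne R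
    simp only [dc, map_mul, map_pow, hconj_omega R, hconj_omega_inv R]
    field_simp
    simp only [one_div, inv_pow]
    field_simp
    ring

lemma starF_P_y (h : H) : starF R α β (R.y * h) = starF R α β h * starF R α β R.y := by
  rw [starF_y]
  refine ext_basis R.basis (starRingEnd ℂ) (fun u => starF R α β (R.y * u))
    (fun u => starF R α β u * (β • R.y)) ?_ ?_ ?_ ?_ ?_ h
  · intro u v; rw [mul_add, starF_add]
  · intro c u; rw [mul_smul_comm, starF_smul]
  · intro u v; rw [starF_add, add_mul]
  · intro c u; rw [starF_smul, smul_mul_assoc]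
  · rintro ⟨r, s, l⟩
    rw [Bn_basis, M_y, starF_master, starF_master, mul_smul_comm, smul_mul_assoc,
      N_y, smul_smul, smul_smul]
    congr 1
    have hωne := homega_ne R
    simp only [dc]
    field_simp
    ring

lemma starF_mul (a h : H) :
    starF R α β (a * h) = starF R α β h * starF R α β a := by
  have ha : a ∈ Algebra.adjoin ℂ ({R.g, R.x, R.y} : Set H) := by rw [R.gen]; trivial
  induction ha using Algebra.adjoin_induction generalizing h with
  | mem z hz =>
      rcases hz with hz | hz | hz
      · rw [hz]; exact starF_P_g R α β h
      · rw [hz]; exact starF_P_x R α β h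
      · rw [hz]; exact starF_P_y R α β h
  | algebraMap c =>
      rw [Algebra.algebraMap_eq_smul_one, smul_mul_assoc, one_mul, starF_smul, starF_smul,
        starF_one, mul_smul_comm, mul_one]
  | add u v hu hv hu' hv' =>
      rw [add_mul, starF_add, hu', hv', starF_add, mul_add]
  | mul u v hu hv hu' hv' =>
      calc starF R α β (u * v * h) = starF R α β (u * (v * h)) := by rw [mul_assoc]
      _ = starF R α β (v * h) * starF R α β u := hu' _
      _ = (starF R α β h * starF R α β v) * starF R α β u := by rw [hv' h]
      _ = starF R α β h * starF R α β (u * v) := by rw [hu' v, mul_assoc]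

-- ============ star on the tensor square ============

section
variable {ιt : Type*} [Fintype ιt] {M : Type*} [AddCommGroup M] [Module ℂ M]

/-- Diagonal conjugate-linear map w.r.t. a basis. -/
def diagConj (b : Module.Basis ιt ℂ M) (d : ιt → ℂ) : M → M := fun m =>
  ∑ p, ((starRingEnd ℂ) (b.repr m p) * d p) • b p

lemma diagConj_add (b : Module.Basis ιt ℂ M) (d : ιt → ℂ) (u v : M) :
    diagConj b d (u + v) = diagConj b d u + diagConj b d v := by
  unfold diagConj
  rw [← Finset.sum_add_distrib]
  refine Finset.sum_congr rfl fun p _ => ?_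
  rw [map_add, Finsupp.add_apply, map_add, add_mul, add_smul]

lemma diagConj_smul (b : Module.Basis ιt ℂ M) (d : ιt → ℂ) (c : ℂ) (u : M) :
    diagConj b d (c • u) = (starRingEnd ℂ) c • diagConj b d u := by
  unfold diagConj
  rw [Finset.smul_sum]
  refine Finset.sum_congr rfl fun p _ => ?_
  rw [map_smul, Finsupp.smul_apply, smul_eq_mul, map_mul, smul_smul, mul_assoc]

lemma diagConj_basis (b : Module.Basis ιt ℂ M) (d : ιt → ℂ) (p : ιt) :
    diagConj b d (b p) = d p • b p := by
  classical
  unfold diagConj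
  rw [Finset.sum_eq_single p]
  · rw [Module.Basis.repr_self, Finsupp.single_apply, if_pos rfl, map_one, one_mul]
  · intro q _ hq
    rw [Module.Basis.repr_self, Finsupp.single_apply, if_neg (by exact fun h => hq h.symm), map_zero,
      zero_mul, zero_smul]
  · intro h; exact absurd (Finset.mem_univ p) h

end

/-- The star map on `H ⊗ H`. -/
def stF2 (R : RadfordAlgebra n ω H) (α β : ℂ) : H ⊗[ℂ] H → H ⊗[ℂ] H :=
  diagConj (R.basis.tensorProduct R.basis)
    (fun pq => dc ω α β pq.1.1 pq.1.2.1 pq.1.2.2 * dc ω α β pq.2.1 pq.2.2.1 pq.2.2.2)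

lemma stF2_add (u v : H ⊗[ℂ] H) : stF2 R α β (u + v) = stF2 R α β u + stF2 R α β v :=
  diagConj_add _ _ u v

lemma stF2_smul (c : ℂ) (u : H ⊗[ℂ] H) :
    stF2 R α β (c • u) = (starRingEnd ℂ) c • stF2 R α β u :=
  diagConj_smul _ _ c u

lemma stF2_tmul (a c : H) :
    stF2 R α β (a ⊗ₜ[ℂ] c) = starF R α β a ⊗ₜ[ℂ] starF R α β c := by
  -- first for basis elements in the second slot, varying the first
  have step1 : ∀ p q : Fin n × Fin n × Fin n,
      stF2 R α β (R.basis p ⊗ₜ[ℂ] R.basis q)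
        = starF R α β (R.basis p) ⊗ₜ[ℂ] starF R α β (R.basis q) := by
    intro p q
    have h1 : R.basis p ⊗ₜ[ℂ] R.basis q = (R.basis.tensorProduct R.basis) (p, q) :=
      (Module.Basis.tensorProduct_apply R.basis R.basis p q).symm
    rw [h1, stF2, diagConj_basis, starF_basis, starF_basis, ← h1]
    dsimp only
    rw [tmul_smul, ← smul_tmul', smul_smul,
      mul_comm (dc ω α β (q.1:ℕ) (q.2.1:ℕ) (q.2.2:ℕ))]
  have step2 : ∀ (q : Fin n × Fin n × Fin n) (a : H),
      stF2 R α β (a ⊗ₜ[ℂ] R.basis q) = starF R α β a ⊗ₜ[ℂ] starF R α β (R.basis q) := by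
    intro q a
    refine ext_basis R.basis (starRingEnd ℂ) (fun u => stF2 R α β (u ⊗ₜ[ℂ] R.basis q))
      (fun u => starF R α β u ⊗ₜ[ℂ] starF R α β (R.basis q)) ?_ ?_ ?_ ?_ ?_ a
    · intro u v; rw [add_tmul, stF2_add]
    · intro c u; rw [← smul_tmul', stF2_smul]
    · intro u v; rw [starF_add, add_tmul]
    · intro c u; rw [starF_smul, ← smul_tmul']
    · intro p; exact step1 p q
  refine ext_basis R.basis (starRingEnd ℂ) (fun u => stF2 R α β (a ⊗ₜ[ℂ] u))
    (fun u => starF R α β a ⊗ₜ[ℂ] starF R α β u) ?_ ?_ ?_ ?_ ?_ c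
  · intro u v; rw [tmul_add, stF2_add]
  · intro c u; rw [tmul_smul, stF2_smul]
  · intro u v; rw [starF_add, tmul_add]
  · intro c u; rw [starF_smul, tmul_smul]
  · intro q; exact step2 q a

lemma stF2_one : stF2 R α β 1 = 1 := by
  rw [Algebra.TensorProduct.one_def, stF2_tmul, starF_one]

lemma stF2_antimul (u v : H ⊗[ℂ] H) :
    stF2 R α β (u * v) = stF2 R α β v * stF2 R α β u := by
  have bb := R.basis.tensorProduct R.basis
  have step1 : ∀ (a c a' c' : H),
      stF2 R α β ((a ⊗ₜ[ℂ] c) * (a' ⊗ₜ[ℂ] c'))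
        = stF2 R α β (a' ⊗ₜ[ℂ] c') * stF2 R α β (a ⊗ₜ[ℂ] c) := by
    intro a c a' c'
    rw [Algebra.TensorProduct.tmul_mul_tmul, stF2_tmul, stF2_tmul, stF2_tmul,
      starF_mul, starF_mul, Algebra.TensorProduct.tmul_mul_tmul]
  have step2 : ∀ (a c : H) (u : H ⊗[ℂ] H),
      stF2 R α β (u * (a ⊗ₜ[ℂ] c)) = stF2 R α β (a ⊗ₜ[ℂ] c) * stF2 R α β u := by
    intro a c u
    refine ext_basis (R.basis.tensorProduct R.basis) (starRingEnd ℂ)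
      (fun w => stF2 R α β (w * (a ⊗ₜ[ℂ] c)))
      (fun w => stF2 R α β (a ⊗ₜ[ℂ] c) * stF2 R α β w) ?_ ?_ ?_ ?_ ?_ u
    · intro w w'; rw [add_mul, stF2_add]
    · intro z w; rw [smul_mul_assoc, stF2_smul]
    · intro w w'; rw [stF2_add, mul_add]
    · intro z w; rw [stF2_smul, mul_smul_comm]
    · rintro ⟨p, q⟩
      rw [Module.Basis.tensorProduct_apply]
      exact step1 _ _ _ _
  refine ext_basis (R.basis.tensorProduct R.basis) (starRingEnd ℂ)
    (fun w => stF2 R α β (u * w)) (fun w => stF2 R α β w * stF2 R α β u) ?_ ?_ ?_ ?_ ?_ v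
  · intro w w'; rw [mul_add, stF2_add]
  · intro z w; rw [mul_smul_comm, stF2_smul]
  · intro w w'; rw [stF2_add, add_mul]
  · intro z w; rw [stF2_smul, smul_mul_assoc]
  · rintro ⟨p, q⟩
    rw [Module.Basis.tensorProduct_apply]
    exact step2 _ _ u

-- ============ comul compatibility ============

lemma comul_starF (a : H) :
    Coalgebra.comul (R := ℂ) (starF R α β a) = stF2 R α β (Coalgebra.comul (R := ℂ) a) := by
  have ha : a ∈ Algebra.adjoin ℂ ({R.g, R.x, R.y} : Set H) := by rw [R.gen]; trivial
  induction ha using Algebra.adjoin_induction with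
  | mem z hz =>
      rcases hz with hz | hz | hz <;> rw [hz]
      · rw [starF_g, R.comul_g, stF2_tmul, starF_g]
      · rw [starF_x, map_smul, R.comul_x, stF2_add, stF2_tmul, stF2_tmul, starF_x, starF_g,
          starF_one, smul_add, smul_tmul', tmul_smul]
      · rw [starF_y, map_smul, R.comul_y, stF2_add, stF2_tmul, stF2_tmul, starF_y, starF_g,
          starF_one, smul_add, smul_tmul', tmul_smul]
  | algebraMap c =>
      rw [Algebra.algebraMap_eq_smul_one, starF_smul, starF_one, map_smul, map_smul,
        Bialgebra.comul_one, stF2_smul, stF2_one]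
  | add u v hu hv hu' hv' =>
      rw [starF_add, map_add, hu', hv', map_add, stF2_add]
  | mul u v hu hv hu' hv' =>
      rw [starF_mul, Bialgebra.comul_mul, hu', hv', Bialgebra.comul_mul, stF2_antimul]

-- ============ the antipode as an explicit anti-homomorphism ============

/-- `tri k = 0 + 1 + ... + (k-1)`. -/
def tri : ℕ → ℕ
  | 0 => 0
  | (k+1) => tri k + k

lemma tri_succ (k : ℕ) : tri (k+1) = tri k + k := rfl

/-- coefficient of the antipode on basis monomials -/
def scn (ω : ℂ) (r s l : ℕ) : ℂ :=
  (-1:ℂ)^(r+s) * ω^(tri s + l*s) * (ω⁻¹)^(tri r + l*r)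

/-- Candidate antipode, defined on the basis. -/
def antF (R : RadfordAlgebra n ω H) : H →ₗ[ℂ] H :=
  R.basis.constr ℂ (fun p =>
    scn ω p.1 p.2.1 p.2.2 • Bn R p.1 p.2.1 ((n-1)*(p.2.2 + p.1 + p.2.1)))

lemma antF_master (r s l : ℕ) :
    antF R (Bn R r s l) = scn ω r s l • Bn R r s ((n-1)*(l + r + s)) := by
  by_cases hr : r < n; swap
  · rw [Bn_zero_of_r R r s l (le_of_not_gt hr), map_zero,
      Bn_zero_of_r R r s _ (le_of_not_gt hr), smul_zero]
  by_cases hs : s < n; swap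
  · rw [Bn_zero_of_s R r s l (le_of_not_gt hs), map_zero,
      Bn_zero_of_s R r s _ (le_of_not_gt hs), smul_zero]
  have hl : l % n < n := Nat.mod_lt _ (Nat.pos_of_ne_zero (hn0 R))
  have hb : antF R (R.basis (⟨r, hr⟩, ⟨s, hs⟩, ⟨l % n, hl⟩))
      = scn ω r s (l % n) • Bn R r s ((n-1)*(l % n + r + s)) := by
    unfold antF
    rw [Module.Basis.constr_basis]
  rw [Bn_basis] at hb
  simp only [Fin.val_mk] at hb
  have hscn : scn ω r s l = scn ω r s (l % n) := by
    unfold scn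
    rw [pow_congr (homega_pow R)
        (Nat.ModEq.symm (((Nat.mod_modEq l n).mul_right s).add_left (tri s))),
      pow_congr (hinv_pow_one R)
        (Nat.ModEq.symm (((Nat.mod_modEq l n).mul_right r).add_left (tri r)))]
  have hBn : Bn R r s ((n-1)*(l + r + s)) = Bn R r s ((n-1)*(l % n + r + s)) := by
    rw [Bn_mod R r s ((n-1)*(l + r + s)), Bn_mod R r s ((n-1)*(l % n + r + s))]
    congr 1
    exact Nat.ModEq.symm (Nat.ModEq.mul_left (n-1) (((Nat.mod_modEq l n).add_right r).add_right s))
  rw [Bn_mod R r s l, hb, hscn, hBn]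

lemma antF_g : antF R R.g = R.g ^ (n-1) := by
  rw [← Bn_g R, antF_master]
  simp [scn, Bn, tri]

lemma antF_x : antF R R.x = -(R.x * R.g ^ (n-1)) := by
  rw [← Bn_x R, antF_master]
  simp [scn, Bn, tri]

lemma antF_y : antF R R.y = -(R.y * R.g ^ (n-1)) := by
  rw [← Bn_y R, antF_master]
  simp [scn, Bn, tri]

lemma antF_one : antF R 1 = 1 := by
  rw [← Bn_one R, antF_master]
  simp [scn, Bn, tri]

lemma antF_P_g (h : H) : antF R (R.g * h) = antF R h * antF R R.g := by
  rw [antF_g]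
  refine ext_basis R.basis (RingHom.id ℂ) (fun u => antF R (R.g * u))
    (fun u => antF R u * R.g ^ (n-1)) ?_ ?_ ?_ ?_ ?_ h
  · intro u v; rw [mul_add, map_add]
  · intro c u; rw [mul_smul_comm, map_smul]; rfl
  · intro u v; rw [map_add, add_mul]
  · intro c u; rw [map_smul, smul_mul_assoc]; rfl
  · rintro ⟨r, s, l⟩
    rw [Bn_basis, M_g, map_smul, antF_master, antF_master, smul_mul_assoc, N_gp, smul_smul]
    rw [show (n-1)*((l:ℕ) + r + s) + (n-1) = (n-1)*((l:ℕ) + 1 + r + s) by ring]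
    congr 1
    have hωne := homega_ne R
    simp only [scn]
    field_simp
    simp only [one_div, inv_pow]
    field_simp
    ring

lemma antF_P_x (h : H) : antF R (R.x * h) = antF R h * antF R R.x := by
  rw [antF_x]
  refine ext_basis R.basis (RingHom.id ℂ) (fun u => antF R (R.x * u))
    (fun u => antF R u * -(R.x * R.g ^ (n-1))) ?_ ?_ ?_ ?_ ?_ h
  · intro u v; rw [mul_add, map_add]
  · intro c u; rw [mul_smul_comm, map_smul]; rfl
  · intro u v; rw [map_add, add_mul]
  · intro c u; rw [map_smul, smul_mul_assoc]; rfl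
  · rintro ⟨r, s, l⟩
    rw [Bn_basis, M_x, map_smul, antF_master, antF_master, mul_neg, ← mul_assoc,
      smul_mul_assoc, smul_mul_assoc, N_x, smul_mul_assoc, smul_smul, N_gp, smul_smul]
    rw [show (n-1)*((l:ℕ) + r + s) + (n-1) = (n-1)*((l:ℕ) + r + (s + 1)) by ring]
    rw [← neg_smul]
    congr 1
    have hωne := homega_ne R
    simp only [scn, tri_succ]
    rw [hinv_nsub_pow R]
    field_simp
    ring

lemma antF_P_y (h : H) : antF R (R.y * h) = antF R h * antF R R.y := by
  rw [antF_y]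
  refine ext_basis R.basis (RingHom.id ℂ) (fun u => antF R (R.y * u))
    (fun u => antF R u * -(R.y * R.g ^ (n-1))) ?_ ?_ ?_ ?_ ?_ h
  · intro u v; rw [mul_add, map_add]
  · intro c u; rw [mul_smul_comm, map_smul]; rfl
  · intro u v; rw [map_add, add_mul]
  · intro c u; rw [map_smul, smul_mul_assoc]; rfl
  · rintro ⟨r, s, l⟩
    rw [Bn_basis, M_y, antF_master, antF_master, mul_neg, ← mul_assoc,
      smul_mul_assoc, smul_mul_assoc, N_y, smul_mul_assoc, smul_smul, N_gp]
    rw [show (n-1)*((l:ℕ) + r + s) + (n-1) = (n-1)*((l:ℕ) + (r+1) + s) by ring]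
    rw [← neg_smul]
    congr 1
    have hωne := homega_ne R
    simp only [scn, tri_succ]
    rw [homega_nsub_pow R]
    field_simp
    simp only [one_div, inv_pow]
    field_simp
    ring

lemma antF_antimul (a h : H) : antF R (a * h) = antF R h * antF R a := by
  have ha : a ∈ Algebra.adjoin ℂ ({R.g, R.x, R.y} : Set H) := by rw [R.gen]; trivial
  induction ha using Algebra.adjoin_induction generalizing h with
  | mem z hz =>
      rcases hz with hz | hz | hz <;> rw [hz]
      · exact antF_P_g R h
      · exact antF_P_x R h
      · exact antF_P_y R h
  | algebraMap c =>
      rw [Algebra.algebraMap_eq_smul_one, smul_mul_assoc, one_mul, map_smul, map_smul,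
        antF_one, mul_smul_comm, mul_one]
  | add u v hu hv hu' hv' =>
      rw [add_mul, map_add, hu', hv', map_add, mul_add]
  | mul u v hu hv hu' hv' =>
      calc antF R (u * v * h) = antF R (u * (v * h)) := by rw [mul_assoc]
      _ = antF R (v * h) * antF R u := hu' _
      _ = (antF R h * antF R v) * antF R u := by rw [hv' h]
      _ = antF R h * antF R (u * v) := by rw [hu' v, mul_assoc]

-- ============ convolution algebra on End(H) ============

section Conv
variable {A : Type*} [Ring A] [HopfAlgebra ℂ A]

/-- Convolution product on linear endomorphisms of a Hopf algebra. -/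
def conv (f f' : A →ₗ[ℂ] A) : A →ₗ[ℂ] A :=
  LinearMap.mul' ℂ A ∘ₗ TensorProduct.map f f' ∘ₗ Coalgebra.comul

lemma conv_def (f f' : A →ₗ[ℂ] A) (a : A) :
    conv f f' a = LinearMap.mul' ℂ A (TensorProduct.map f f' (Coalgebra.comul (R := ℂ) a)) :=
  rfl

lemma conv_apply_repr (f f' : A →ₗ[ℂ] A) {a : A} {ι : Type*} (re : Coalgebra.Repr ℂ a ι) :
    conv f f' a = ∑ i ∈ re.index, f (re.left i) * f' (re.right i) := by
  rw [conv_def, ← re.eq, map_sum, map_sum]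
  exact Finset.sum_congr rfl fun i _ => by rw [TensorProduct.map_tmul, LinearMap.mul'_apply]

/-- The convolution unit. -/
def cunit : A →ₗ[ℂ] A := Algebra.linearMap ℂ A ∘ₗ Coalgebra.counit

lemma cunit_def (a : A) : cunit a = algebraMap ℂ A (Coalgebra.counit (R := ℂ) a) := rfl

lemma conv_cunit_right (f : A →ₗ[ℂ] A) : conv f cunit = f := by
  ext a
  have key : ∀ t : A ⊗[ℂ] A, LinearMap.mul' ℂ A (TensorProduct.map f cunit t)
      = LinearMap.mul' ℂ A (TensorProduct.map f (Algebra.linearMap ℂ A)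
          ((LinearMap.lTensor A (Coalgebra.counit (R := ℂ))) t)) := by
    intro t
    induction t with
    | zero => simp
    | tmul u v => simp [cunit_def, LinearMap.mul'_apply]
    | add u v hu hv => simp only [map_add, hu, hv]
  rw [conv_def, key, Coalgebra.lTensor_counit_comul]
  simp [LinearMap.mul'_apply]

lemma conv_cunit_left (f : A →ₗ[ℂ] A) : conv cunit f = f := by
  ext a
  have key : ∀ t : A ⊗[ℂ] A, LinearMap.mul' ℂ A (TensorProduct.map cunit f t)
      = LinearMap.mul' ℂ A (TensorProduct.map (Algebra.linearMap ℂ A) f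
          ((LinearMap.rTensor A (Coalgebra.counit (R := ℂ))) t)) := by
    intro t
    induction t with
    | zero => simp
    | tmul u v => simp [cunit_def, LinearMap.mul'_apply]
    | add u v hu hv => simp only [map_add, hu, hv]
  rw [conv_def, key, Coalgebra.rTensor_counit_comul]
  simp [LinearMap.mul'_apply, Algebra.smul_def]

lemma conv_assoc (f f' f'' : A →ₗ[ℂ] A) :
    conv (conv f f') f'' = conv f (conv f' f'') := by
  set Φ : A ⊗[ℂ] (A ⊗[ℂ] A) →ₗ[ℂ] A :=
    LinearMap.mul' ℂ A ∘ₗ LinearMap.lTensor A (LinearMap.mul' ℂ A) ∘ₗ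
      TensorProduct.map f (TensorProduct.map f' f'') with hΦ
  set Ψ : (A ⊗[ℂ] A) ⊗[ℂ] A →ₗ[ℂ] A :=
    LinearMap.mul' ℂ A ∘ₗ LinearMap.rTensor A (LinearMap.mul' ℂ A) ∘ₗ
      TensorProduct.map (TensorProduct.map f f') f'' with hΨ
  have hΨΦ : ∀ t, Ψ t = Φ (TensorProduct.assoc ℂ A A A t) := by
    intro t
    induction t with
    | zero => rw [map_zero, LinearEquiv.map_zero, map_zero]
    | tmul u c =>
        induction u with
        | zero => rw [TensorProduct.zero_tmul, map_zero, LinearEquiv.map_zero, map_zero]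
        | tmul a b => simp [hΦ, hΨ, LinearMap.mul'_apply, mul_assoc]
        | add a b ha hb =>
            rw [TensorProduct.add_tmul, map_add, LinearEquiv.map_add, map_add, ha, hb]
    | add u v hu hv => rw [map_add, LinearEquiv.map_add, map_add, hu, hv]
  have e1 : ∀ t : A ⊗[ℂ] A, LinearMap.mul' ℂ A (TensorProduct.map (conv f f') f'' t)
      = Ψ (LinearMap.rTensor A (Coalgebra.comul (R := ℂ)) t) := by
    intro t
    induction t with
    | zero => simp
    | tmul u v => simp [hΨ, conv_def, LinearMap.mul'_apply]
    | add u v hu hv => simp only [map_add, hu, hv]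
  have e2 : ∀ t : A ⊗[ℂ] A, LinearMap.mul' ℂ A (TensorProduct.map f (conv f' f'') t)
      = Φ (LinearMap.lTensor A (Coalgebra.comul (R := ℂ)) t) := by
    intro t
    induction t with
    | zero => simp
    | tmul u v => simp [hΦ, conv_def, LinearMap.mul'_apply]
    | add u v hu hv => simp only [map_add, hu, hv]
  ext a
  rw [conv_def, conv_def, e1, e2, hΨΦ, Coalgebra.coassoc_apply]

lemma conv_id_antipode : conv LinearMap.id (HopfAlgebra.antipode (R := ℂ) (A := A)) = cunit := by
  ext a
  rw [conv_def, cunit_def]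
  have : TensorProduct.map LinearMap.id (HopfAlgebra.antipode (R := ℂ) (A := A))
      = LinearMap.lTensor A (HopfAlgebra.antipode (R := ℂ)) := rfl
  rw [this, HopfAlgebra.mul_antipode_lTensor_comul_apply]

/-- Uniqueness of the left convolution inverse of the identity. -/
lemma eq_antipode_of_conv (T : A →ₗ[ℂ] A) (hT : conv T LinearMap.id = cunit) :
    T = HopfAlgebra.antipode (R := ℂ) := by
  calc T = conv T cunit := (conv_cunit_right T).symm
  _ = conv T (conv LinearMap.id (HopfAlgebra.antipode (R := ℂ))) := by rw [conv_id_antipode]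
  _ = conv (conv T LinearMap.id) (HopfAlgebra.antipode (R := ℂ)) := (conv_assoc _ _ _).symm
  _ = conv cunit (HopfAlgebra.antipode (R := ℂ)) := by rw [hT]
  _ = HopfAlgebra.antipode (R := ℂ) := conv_cunit_left _

end Conv

lemma conv_antF_one : conv (antF R) LinearMap.id (1 : H) = cunit 1 := by
  rw [conv_def, Bialgebra.comul_one, Algebra.TensorProduct.one_def, TensorProduct.map_tmul,
    LinearMap.mul'_apply, antF_one, cunit_def, Bialgebra.counit_one]
  simp

lemma conv_antF_id (a : H) : conv (antF R) LinearMap.id a = cunit a := by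
  have ha : a ∈ Algebra.adjoin ℂ ({R.g, R.x, R.y} : Set H) := by rw [R.gen]; trivial
  induction ha using Algebra.adjoin_induction with
  | mem z hz =>
      rcases hz with hz | hz | hz <;> rw [hz]
      · rw [conv_def, R.comul_g, TensorProduct.map_tmul, LinearMap.mul'_apply, antF_g,
          LinearMap.id_apply, cunit_def, R.counit_g, map_one, ← pow_succ,
          show n - 1 + 1 = n by have := R.hn; omega, R.g_pow]
      · rw [conv_def, R.comul_x, map_add, TensorProduct.map_tmul, TensorProduct.map_tmul,
          map_add, LinearMap.mul'_apply, LinearMap.mul'_apply, antF_x, antF_one,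
          LinearMap.id_apply, LinearMap.id_apply, cunit_def, R.counit_x, map_zero, one_mul,
          neg_mul, mul_assoc, ← pow_succ, show n - 1 + 1 = n by have := R.hn; omega, R.g_pow,
          mul_one, neg_add_cancel]
      · rw [conv_def, R.comul_y, map_add, TensorProduct.map_tmul, TensorProduct.map_tmul,
          map_add, LinearMap.mul'_apply, LinearMap.mul'_apply, antF_y, antF_one,
          LinearMap.id_apply, LinearMap.id_apply, cunit_def, R.counit_y, map_zero, one_mul,
          neg_mul, mul_assoc, ← pow_succ, show n - 1 + 1 = n by have := R.hn; omega, R.g_pow,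
          mul_one, neg_add_cancel]
  | algebraMap c =>
      rw [Algebra.algebraMap_eq_smul_one, map_smul, map_smul, conv_antF_one]
  | add u v hu hv hu' hv' => rw [map_add, map_add, hu', hv']
  | mul u v hu hv hu' hv' =>
      classical
      set ru := Coalgebra.Repr.arbitrary ℂ u with hru
      set rv := Coalgebra.Repr.arbitrary ℂ v with hrv
      have heq : ∑ ij ∈ ru.index ×ˢ rv.index,
          (ru.left ij.1 * rv.left ij.2) ⊗ₜ[ℂ] (ru.right ij.1 * rv.right ij.2)
          = CoalgebraStruct.comul (R := ℂ) (u * v) := by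
        rw [show CoalgebraStruct.comul (R := ℂ) (u * v)
            = Coalgebra.comul (R := ℂ) (u * v) from rfl,
          Bialgebra.comul_mul, ← ru.eq, ← rv.eq, Finset.sum_mul_sum, Finset.sum_product]
        exact Finset.sum_congr rfl fun i _ => Finset.sum_congr rfl fun j _ =>
          (Algebra.TensorProduct.tmul_mul_tmul _ _ _ _).symm
      set rp : Coalgebra.Repr ℂ (u * v) ((H × H) × (H × H)) :=
        ⟨ru.index ×ˢ rv.index, fun ij => ru.left ij.1 * rv.left ij.2,
         fun ij => ru.right ij.1 * rv.right ij.2, heq⟩ with hrp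
      rw [conv_apply_repr _ _ rp]
      have hu2 : ∑ i ∈ ru.index, antF R (ru.left i) * ru.right i
          = algebraMap ℂ H (Coalgebra.counit (R := ℂ) u) := by
        have := conv_apply_repr (antF R) LinearMap.id ru
        rw [hu'] at this
        simpa [cunit_def] using this.symm
      have hv2 : ∑ j ∈ rv.index, antF R (rv.left j) * rv.right j
          = algebraMap ℂ H (Coalgebra.counit (R := ℂ) v) := by
        have := conv_apply_repr (antF R) LinearMap.id rv
        rw [hv'] at this
        simpa [cunit_def] using this.symm
      calc ∑ ij ∈ ru.index ×ˢ rv.index, antF R (rp.left ij) * LinearMap.id (rp.right ij)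
          = ∑ j ∈ rv.index, ∑ i ∈ ru.index,
              antF R (rv.left j) * ((antF R (ru.left i) * ru.right i) * rv.right j) := by
            rw [Finset.sum_product_right]
            refine Finset.sum_congr rfl fun j _ => Finset.sum_congr rfl fun i _ => ?_
            show antF R (ru.left i * rv.left j) * (ru.right i * rv.right j) = _
            rw [antF_antimul]
            rw [mul_assoc, ← mul_assoc (antF R (ru.left i)), ← mul_assoc]
      _ = ∑ j ∈ rv.index, antF R (rv.left j)
            * (algebraMap ℂ H (Coalgebra.counit (R := ℂ) u) * rv.right j) := by
            refine Finset.sum_congr rfl fun j _ => ?_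
            rw [← Finset.mul_sum, ← Finset.sum_mul, hu2]
      _ = algebraMap ℂ H (Coalgebra.counit (R := ℂ) u)
            * ∑ j ∈ rv.index, antF R (rv.left j) * rv.right j := by
            rw [Finset.mul_sum]
            refine Finset.sum_congr rfl fun j _ => ?_
            rw [← mul_assoc, ← Algebra.commutes, mul_assoc]
      _ = cunit (u * v) := by
            rw [hv2, cunit_def, Bialgebra.counit_mul, map_mul]

lemma antipode_eq_antF : HopfAlgebra.antipode (R := ℂ) (A := H) = antF R :=
  (eq_antipode_of_conv (antF R) (LinearMap.ext fun a => conv_antF_id R a)).symm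

lemma Bn_00k (k : ℕ) : Bn R 0 0 k = R.g ^ k := by simp [Bn]
lemma Bn_01k (k : ℕ) : Bn R 0 1 k = R.x * R.g ^ k := by simp [Bn]
lemma Bn_10k (k : ℕ) : Bn R 1 0 k = R.y * R.g ^ k := by simp [Bn]

lemma g_nsub_sq : R.g ^ ((n-1)*((n-1) + 0 + 0)) = R.g := by
  have h : ((n-1)*((n-1)+0+0)) % n = 1 % n := by
    obtain ⟨m, rfl⟩ : ∃ m, n = m + 2 := ⟨n - 2, by have := R.hn; omega⟩
    have h2 : m + 2 - 1 = m + 1 := by omega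
    rw [h2, show (m+1)*((m+1)+0+0) = (m+2)*m + 1 by ring, Nat.mul_add_mod]
  rw [pow_congr R.g_pow h, pow_one]

lemma g_ns_n : R.g ^ ((n-1)*n) = 1 := by rw [mul_comm, pow_mul, R.g_pow, one_pow]

lemma starF_neg (v : H) : starF R α β (-v) = - starF R α β v := by
  rw [← neg_one_smul ℂ v, starF_smul]
  simp

lemma antF_starF (hα : ‖α‖ = 1) (hβ : ‖β‖ = 1) (a : H) :
    antF R (starF R α β (antF R (starF R α β a))) = a := by
  have hαc : (starRingEnd ℂ) α = α⁻¹ := habs_one_conj hα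
  have hβc : (starRingEnd ℂ) β = β⁻¹ := habs_one_conj hβ
  have hαne := habs_one_ne hα
  have hβne := habs_one_ne hβ
  have hωne := homega_ne R
  have ha : a ∈ Algebra.adjoin ℂ ({R.g, R.x, R.y} : Set H) := by rw [R.gen]; trivial
  induction ha using Algebra.adjoin_induction with
  | mem z hz =>
      rcases hz with hz | hz | hz <;> rw [hz]
      · have h1 : starF R α β (Bn R 0 0 (n-1)) = Bn R 0 0 (n-1) := by
          rw [starF_master]; simp [dc]
        have h2 : antF R (Bn R 0 0 (n-1)) = R.g := by
          rw [antF_master, show scn ω 0 0 (n-1) = 1 by simp [scn, tri], one_smul,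
            Bn_00k, g_nsub_sq]
        rw [starF_g, antF_g, ← Bn_00k R (n-1), h1, h2]
      · have hB : R.x * R.g ^ (n-1) = Bn R 0 1 (n-1) := (Bn_01k R (n-1)).symm
        rw [starF_x, map_smul, antF_x, hB, smul_neg, starF_neg, starF_smul, starF_master,
          map_neg, map_smul, map_smul, antF_master,
          show (n-1)*((n-1) + 0 + 1) = (n-1)*n by (congr 1; have := R.hn; omega),
          Bn_01k, g_ns_n R, mul_one]
        rw [smul_smul, smul_smul, ← neg_smul]
        have hc : -((starRingEnd ℂ) α * dc ω α β 0 1 (n-1) * scn ω 0 1 (n-1)) = 1 := by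
          simp only [dc, scn, tri, hαc, pow_zero, pow_one, one_mul, mul_one, Nat.zero_add,
            Nat.add_zero, Nat.mul_zero, Nat.zero_mul, Nat.mul_one, Nat.one_mul]
          field_simp
          simp only [one_div, inv_pow]
          field_simp
        rw [hc, one_smul]
      · have hB : R.y * R.g ^ (n-1) = Bn R 1 0 (n-1) := (Bn_10k R (n-1)).symm
        rw [starF_y, map_smul, antF_y, hB, smul_neg, starF_neg, starF_smul, starF_master,
          map_neg, map_smul, map_smul, antF_master,
          show (n-1)*((n-1) + 1 + 0) = (n-1)*n by (congr 1; have := R.hn; omega),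
          Bn_10k, g_ns_n R, mul_one]
        rw [smul_smul, smul_smul, ← neg_smul]
        have hc : -((starRingEnd ℂ) β * dc ω α β 1 0 (n-1) * scn ω 1 0 (n-1)) = 1 := by
          simp only [dc, scn, tri, hβc, pow_zero, pow_one, one_mul, mul_one, Nat.zero_add,
            Nat.add_zero, Nat.mul_zero, Nat.zero_mul, Nat.mul_one, Nat.one_mul]
          field_simp
          simp only [one_div, inv_pow]
          field_simp
        rw [hc, one_smul]
  | algebraMap c =>
      rw [Algebra.algebraMap_eq_smul_one, starF_smul, starF_one, map_smul, antF_one,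
        starF_smul, starF_one, map_smul, antF_one, Complex.conj_conj]
  | add u v hu hv hu' hv' =>
      rw [starF_add, map_add, starF_add, map_add, hu', hv']
  | mul u v hu hv hu' hv' =>
      rw [starF_mul, antF_antimul, starF_mul, antF_antimul, hu', hv']

end
end RadfordStarAux

/-- For `α, β ∈ ℂ` with `|α| = |β| = 1`, the Radford algebra `H`
admits a `*`-structure with `g* = g`, `x* = α x`, `y* = β y`. -/
theorem radford_star_structure_of_unit_scalars
    {n : ℕ} {ω : ℂ} {H : Type*} [Ring H] [HopfAlgebra ℂ H]
    (R : RadfordAlgebra n ω H) (α β : ℂ)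
    (hα : ‖α‖ = 1) (hβ : ‖β‖ = 1) :
    ∃ st : HopfStarStructure H,
      st.star R.g = R.g ∧ st.star R.x = α • R.x ∧ st.star R.y = β • R.y := by
  classical
  refine ⟨{
    star := RadfordStarAux.starF R α β
    star_add := RadfordStarAux.starF_add R α β
    star_smul := RadfordStarAux.starF_smul R α β
    star_star := RadfordStarAux.starF_starF R α β hα hβ
    star_mul := fun a b => by
      rw [RadfordStarAux.starF_mul R α β a b]
    starTensor := RadfordStarAux.stF2 R α β
    starTensor_add := RadfordStarAux.stF2_add R α β
    starTensor_tmul := RadfordStarAux.stF2_tmul R α β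
    comul_star := RadfordStarAux.comul_starF R α β
    antipode_star := ?_ },
    RadfordStarAux.starF_g R α β, RadfordStarAux.starF_x R α β,
    RadfordStarAux.starF_y R α β⟩
  intro a
  have hS := RadfordStarAux.antipode_eq_antF R
  rw [hS]
  exact RadfordStarAux.antF_starF R α β hα hβ a
end
end

section
/- Assume n = 2 and let A = (α_{ij}) ∈ M₂(ℂ) be a 2×2 complex matrix with Ā·A = I₂, where Ā denotes the entrywise complex conjugate of A. Then the Radford algebra H admits a *-structure (making H a Hopf *-algebra) uniquely determined by g* = g, x* = α₁₁x + α₁₂y, y* = α₂₁x + α₂₂y. -/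
open TensorProduct

noncomputable section

namespace RadfordAux

open Coalgebra HopfAlgebra

variable {ω : ℂ} {H : Type*} [Ring H] [HopfAlgebra ℂ H]

variable (R : RadfordAlgebra 2 ω H)

include R in
lemma omega_eq : ω = -1 := IsPrimitiveRoot.eq_neg_one_of_two_right R.hω

lemma gg : R.g * R.g = 1 := by have := R.g_pow; rwa [pow_two] at this
lemma xx : R.x * R.x = 0 := by have := R.x_pow; rwa [pow_two] at this
lemma yy : R.y * R.y = 0 := by have := R.y_pow; rwa [pow_two] at this

lemma gx : R.g * R.x = -(R.x * R.g) := by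
  rw [R.rel_xg]; simp only [omega_eq R, neg_one_smul, neg_neg]

lemma gy : R.g * R.y = -(R.y * R.g) := by
  rw [R.rel_gy]; simp only [omega_eq R, neg_one_smul]

lemma xy : R.x * R.y = -(R.y * R.x) := by
  rw [R.rel_xy]; simp only [omega_eq R, neg_one_smul]

lemma gg' (t : H) : R.g * (R.g * t) = t := by rw [← mul_assoc, gg, one_mul]
lemma xx' (t : H) : R.x * (R.x * t) = 0 := by rw [← mul_assoc, xx, zero_mul]
lemma yy' (t : H) : R.y * (R.y * t) = 0 := by rw [← mul_assoc, yy, zero_mul]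
lemma gx' (t : H) : R.g * (R.x * t) = -(R.x * (R.g * t)) := by
  rw [← mul_assoc, gx, neg_mul, mul_assoc]
lemma gy' (t : H) : R.g * (R.y * t) = -(R.y * (R.g * t)) := by
  rw [← mul_assoc, gy, neg_mul, mul_assoc]
lemma xy' (t : H) : R.x * (R.y * t) = -(R.y * (R.x * t)) := by
  rw [← mul_assoc, xy, neg_mul, mul_assoc]

variable (A : Matrix (Fin 2) (Fin 2) ℂ)

/-- images of the basis monomials under the star map -/
def sT : Fin 2 × Fin 2 × Fin 2 → H := fun i =>
  ![![![(1 : H), R.g],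
      ![A 0 0 • R.x + A 0 1 • R.y, -(A 0 0 • (R.x * R.g) + A 0 1 • (R.y * R.g))]],
    ![![A 1 0 • R.x + A 1 1 • R.y, -(A 1 0 • (R.x * R.g) + A 1 1 • (R.y * R.g))],
      ![(A 0 1 * A 1 0 - A 0 0 * A 1 1) • (R.y * R.x),
        (A 0 1 * A 1 0 - A 0 0 * A 1 1) • (R.y * (R.x * R.g))]]] i.1 i.2.1 i.2.2

/-- the star map -/
def starFun : H → H := fun h => ∑ i, (starRingEnd ℂ) (R.basis.repr h i) • sT R A i

lemma starFun_add (h h' : H) : starFun R A (h + h') = starFun R A h + starFun R A h' := by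
  simp [starFun, add_smul, Finset.sum_add_distrib]

lemma starFun_smul (c : ℂ) (h : H) :
    starFun R A (c • h) = (starRingEnd ℂ) c • starFun R A h := by
  simp [starFun, Finset.smul_sum, smul_smul]

/-- star map as an additive monoid hom -/
def starHom : H →+ H := AddMonoidHom.mk' (starFun R A) (starFun_add R A)

lemma starFun_neg (h : H) : starFun R A (-h) = -starFun R A h :=
  map_neg (starHom R A) h

lemma starFun_zero : starFun R A (0 : H) = 0 := map_zero (starHom R A)

lemma starFun_basis (i : Fin 2 × Fin 2 × Fin 2) : starFun R A (R.basis i) = sT R A i := by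
  rw [starFun, R.basis.repr_self, Finset.sum_eq_single i]
  · simp
  · intro j _ hj
    simp [Finsupp.single_apply, if_neg (Ne.symm hj)]
  · simp


lemma star_mono (r s l : Fin 2) :
    starFun R A (R.y ^ (r : ℕ) * (R.x ^ (s : ℕ) * R.g ^ (l : ℕ))) = sT R A (r, s, l) := by
  rw [← mul_assoc, ← R.basis_eq, starFun_basis]

lemma star_one : starFun R A 1 = 1 := by simpa [sT] using star_mono R A 0 0 0
lemma star_g : starFun R A R.g = R.g := by simpa [sT] using star_mono R A 0 0 1
lemma star_x : starFun R A R.x = A 0 0 • R.x + A 0 1 • R.y := by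
  simpa [sT] using star_mono R A 0 1 0
lemma star_y : starFun R A R.y = A 1 0 • R.x + A 1 1 • R.y := by
  simpa [sT] using star_mono R A 1 0 0
lemma star_xg : starFun R A (R.x * R.g) = -(A 0 0 • (R.x * R.g) + A 0 1 • (R.y * R.g)) := by
  simpa [sT] using star_mono R A 0 1 1
lemma star_yg : starFun R A (R.y * R.g) = -(A 1 0 • (R.x * R.g) + A 1 1 • (R.y * R.g)) := by
  simpa [sT] using star_mono R A 1 0 1
lemma star_yx : starFun R A (R.y * R.x) = (A 0 1 * A 1 0 - A 0 0 * A 1 1) • (R.y * R.x) := by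
  simpa [sT] using star_mono R A 1 1 0
lemma star_yxg : starFun R A (R.y * (R.x * R.g)) =
    (A 0 1 * A 1 0 - A 0 0 * A 1 1) • (R.y * (R.x * R.g)) := by
  simpa [sT, mul_assoc] using star_mono R A 1 1 1

/-- extension lemma: σ-semilinear additive maps agreeing on the basis agree. -/
lemma ext_semilinear {M : Type*} [AddCommMonoid M] [Module ℂ M] (σ : ℂ →+* ℂ)
    (f₁ f₂ : H →+ M)
    (hs₁ : ∀ (c : ℂ) (h : H), f₁ (c • h) = σ c • f₁ h)
    (hs₂ : ∀ (c : ℂ) (h : H), f₂ (c • h) = σ c • f₂ h)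
    (hb : ∀ i, f₁ (R.basis i) = f₂ (R.basis i)) (h : H) : f₁ h = f₂ h := by
  rw [← R.basis.sum_repr h, map_sum, map_sum]
  exact Finset.sum_congr rfl fun i _ => by rw [hs₁, hs₂, hb]


lemma star_mul_gen_g (t : H) :
    starFun R A (R.g * t) = starFun R A t * starFun R A R.g := by
  refine ext_semilinear R (starRingEnd ℂ)
    ((starHom R A).comp (AddMonoidHom.mulLeft R.g))
    ((AddMonoidHom.mulRight (starFun R A R.g)).comp (starHom R A))
    (fun c h => ?_) (fun c h => ?_) (fun i => ?_) t
  · simp only [AddMonoidHom.comp_apply, AddMonoidHom.coe_mulLeft, mul_smul_comm]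
    exact starFun_smul R A c (R.g * h)
  · simp only [AddMonoidHom.comp_apply, AddMonoidHom.coe_mulRight]
    rw [show (starHom R A) (c • h) = starFun R A (c • h) from rfl, starFun_smul, smul_mul_assoc]
    rfl
  · obtain ⟨r, s, l⟩ := i
    fin_cases r <;> fin_cases s <;> fin_cases l <;>
      (rw [AddMonoidHom.comp_apply, AddMonoidHom.comp_apply]; rw [R.basis_eq]) <;>
      (simp only [AddMonoidHom.coe_mulLeft, AddMonoidHom.coe_mulRight,
        show ∀ h, starHom R A h = starFun R A h from fun _ => rfl]) <;>
      simp [gg R, xx R, yy R, gx R, gy R, xy R, gg' R, xx' R, yy' R, gx' R, gy' R, xy' R,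
        star_one, star_g, star_x, star_y, star_xg, star_yg, star_yx, star_yxg,
        starFun_neg, starFun_zero, mul_assoc, mul_add, add_mul, smul_mul_assoc,
        mul_smul_comm, smul_smul, smul_add, smul_neg] <;>
      module

lemma star_mul_gen_x (t : H) :
    starFun R A (R.x * t) = starFun R A t * starFun R A R.x := by
  refine ext_semilinear R (starRingEnd ℂ)
    ((starHom R A).comp (AddMonoidHom.mulLeft R.x))
    ((AddMonoidHom.mulRight (starFun R A R.x)).comp (starHom R A))
    (fun c h => ?_) (fun c h => ?_) (fun i => ?_) t
  · simp only [AddMonoidHom.comp_apply, AddMonoidHom.coe_mulLeft, mul_smul_comm]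
    exact starFun_smul R A c (R.x * h)
  · simp only [AddMonoidHom.comp_apply, AddMonoidHom.coe_mulRight]
    rw [show (starHom R A) (c • h) = starFun R A (c • h) from rfl, starFun_smul, smul_mul_assoc]
    rfl
  · obtain ⟨r, s, l⟩ := i
    fin_cases r <;> fin_cases s <;> fin_cases l <;>
      (rw [AddMonoidHom.comp_apply, AddMonoidHom.comp_apply]; rw [R.basis_eq]) <;>
      (simp only [AddMonoidHom.coe_mulLeft, AddMonoidHom.coe_mulRight,
        show ∀ h, starHom R A h = starFun R A h from fun _ => rfl]) <;>
      simp [gg R, xx R, yy R, gx R, gy R, xy R, gg' R, xx' R, yy' R, gx' R, gy' R, xy' R,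
        star_one, star_g, star_x, star_y, star_xg, star_yg, star_yx, star_yxg,
        starFun_neg, starFun_zero, mul_assoc, mul_add, add_mul, smul_mul_assoc,
        mul_smul_comm, smul_smul, smul_add, smul_neg] <;>
      module

lemma star_mul_gen_y (t : H) :
    starFun R A (R.y * t) = starFun R A t * starFun R A R.y := by
  refine ext_semilinear R (starRingEnd ℂ)
    ((starHom R A).comp (AddMonoidHom.mulLeft R.y))
    ((AddMonoidHom.mulRight (starFun R A R.y)).comp (starHom R A))
    (fun c h => ?_) (fun c h => ?_) (fun i => ?_) t
  · simp only [AddMonoidHom.comp_apply, AddMonoidHom.coe_mulLeft, mul_smul_comm]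
    exact starFun_smul R A c (R.y * h)
  · simp only [AddMonoidHom.comp_apply, AddMonoidHom.coe_mulRight]
    rw [show (starHom R A) (c • h) = starFun R A (c • h) from rfl, starFun_smul, smul_mul_assoc]
    rfl
  · obtain ⟨r, s, l⟩ := i
    fin_cases r <;> fin_cases s <;> fin_cases l <;>
      (rw [AddMonoidHom.comp_apply, AddMonoidHom.comp_apply]; rw [R.basis_eq]) <;>
      (simp only [AddMonoidHom.coe_mulLeft, AddMonoidHom.coe_mulRight,
        show ∀ h, starHom R A h = starFun R A h from fun _ => rfl]) <;>
      simp [gg R, xx R, yy R, gx R, gy R, xy R, gg' R, xx' R, yy' R, gx' R, gy' R, xy' R,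
        star_one, star_g, star_x, star_y, star_xg, star_yg, star_yx, star_yxg,
        starFun_neg, starFun_zero, mul_assoc, mul_add, add_mul, smul_mul_assoc,
        mul_smul_comm, smul_smul, smul_add, smul_neg] <;>
      module

lemma star_antimul (h t : H) :
    starFun R A (h * t) = starFun R A t * starFun R A h := by
  have mem : h ∈ Algebra.adjoin ℂ ({R.g, R.x, R.y} : Set H) := by rw [R.gen]; trivial
  induction mem using Algebra.adjoin_induction generalizing t with
  | mem z hz =>
    rcases hz with rfl | rfl | rfl
    · exact star_mul_gen_g R A t
    · exact star_mul_gen_x R A t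
    · exact star_mul_gen_y R A t
  | algebraMap r =>
    rw [Algebra.algebraMap_eq_smul_one, smul_mul_assoc, one_mul, starFun_smul,
      starFun_smul, star_one, mul_smul_comm, mul_one]
  | add z w hz hw ihz ihw =>
    rw [add_mul, starFun_add, starFun_add, ihz, ihw, mul_add]
  | mul z w hz hw ihz ihw =>
    rw [mul_assoc, ihz, ihw, ihz, mul_assoc]

lemma starHom_apply (h : H) : starHom R A h = starFun R A h := rfl

lemma entries (hA : A.map (starRingEnd ℂ) * A = 1) :
    ((starRingEnd ℂ) (A 0 0) * A 0 0 + (starRingEnd ℂ) (A 0 1) * A 1 0 = 1) ∧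
    ((starRingEnd ℂ) (A 0 0) * A 0 1 + (starRingEnd ℂ) (A 0 1) * A 1 1 = 0) ∧
    ((starRingEnd ℂ) (A 1 0) * A 0 0 + (starRingEnd ℂ) (A 1 1) * A 1 0 = 0) ∧
    ((starRingEnd ℂ) (A 1 0) * A 0 1 + (starRingEnd ℂ) (A 1 1) * A 1 1 = 1) := by
  have key : ∀ i j, (A.map (starRingEnd ℂ) * A) i j = (1 : Matrix (Fin 2) (Fin 2) ℂ) i j :=
    fun i j => by rw [hA]
  have k00 := key 0 0; have k01 := key 0 1; have k10 := key 1 0; have k11 := key 1 1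
  simp [Matrix.mul_apply, Matrix.map_apply, Fin.sum_univ_two, Matrix.one_apply] at k00 k01 k10 k11
  exact ⟨k00, k01, k10, k11⟩

lemma det_entry (hA : A.map (starRingEnd ℂ) * A = 1) :
    (starRingEnd ℂ) (A 0 1 * A 1 0 - A 0 0 * A 1 1) * (A 0 1 * A 1 0 - A 0 0 * A 1 1) = 1 := by
  have h1 : (starRingEnd ℂ) A.det * A.det = 1 := by
    rw [RingHom.map_det, show (starRingEnd ℂ).mapMatrix A = A.map (starRingEnd ℂ) from rfl,
      ← Matrix.det_mul, hA, Matrix.det_one]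
  rw [Matrix.det_fin_two] at h1
  rw [show (A 0 1 * A 1 0 - A 0 0 * A 1 1) = -(A 0 0 * A 1 1 - A 0 1 * A 1 0) by ring,
    map_neg, neg_mul_neg]
  exact h1

lemma star_star (hA : A.map (starRingEnd ℂ) * A = 1) (h : H) :
    starFun R A (starFun R A h) = h := by
  obtain ⟨e00, e01, e10, e11⟩ := entries A hA
  have hdet := det_entry A hA
  refine ext_semilinear R (RingHom.id ℂ) ((starHom R A).comp (starHom R A))
    (AddMonoidHom.id H) (fun c h => ?_) (fun c h => by simp) (fun i => ?_) h
  · simp only [AddMonoidHom.comp_apply, starHom_apply, starFun_smul, Complex.conj_conj,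
      RingHom.id_apply]
  · simp only [AddMonoidHom.comp_apply, AddMonoidHom.id_apply, starHom_apply]
    obtain ⟨r, s, l⟩ := i
    fin_cases r <;> fin_cases s <;> fin_cases l <;> rw [R.basis_eq] <;>
      simp only [Fin.isValue, Fin.val_zero, Fin.val_one, pow_zero, pow_one, one_mul, mul_one]
    · rw [star_one, star_one]
    · rw [star_g, star_g]
    · rw [star_x, starFun_add, starFun_smul, starFun_smul, star_x, star_y]
      match_scalars
      · linear_combination e00
      · linear_combination e01
    · rw [star_xg, starFun_neg, starFun_add, starFun_smul, starFun_smul, star_xg, star_yg]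
      match_scalars
      · linear_combination e00
      · linear_combination e01
    · rw [star_y, starFun_add, starFun_smul, starFun_smul, star_x, star_y]
      match_scalars
      · linear_combination e10
      · linear_combination e11
    · rw [star_yg, starFun_neg, starFun_add, starFun_smul, starFun_smul, star_xg, star_yg]
      match_scalars
      · linear_combination e10
      · linear_combination e11
    · rw [star_yx, starFun_smul, star_yx]
      match_scalars
      linear_combination hdet
    · rw [mul_assoc, star_yxg, starFun_smul, star_yxg]
      match_scalars
      linear_combination hdet

lemma comul_one' : Coalgebra.comul (R := ℂ) (1 : H) = 1 ⊗ₜ[ℂ] 1 := by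
  rw [Bialgebra.comul_one, Algebra.TensorProduct.one_def]

lemma comul_xg : Coalgebra.comul (R := ℂ) (R.x * R.g) =
    (R.x * R.g) ⊗ₜ[ℂ] 1 + R.g ⊗ₜ[ℂ] (R.x * R.g) := by
  rw [Bialgebra.comul_mul, R.comul_x, R.comul_g]
  simp [add_mul, Algebra.TensorProduct.tmul_mul_tmul, gg R]

lemma comul_yg : Coalgebra.comul (R := ℂ) (R.y * R.g) =
    (R.y * R.g) ⊗ₜ[ℂ] 1 + R.g ⊗ₜ[ℂ] (R.y * R.g) := by
  rw [Bialgebra.comul_mul, R.comul_y, R.comul_g]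
  simp [add_mul, Algebra.TensorProduct.tmul_mul_tmul, gg R]

lemma comul_yx : Coalgebra.comul (R := ℂ) (R.y * R.x) =
    (R.y * R.x) ⊗ₜ[ℂ] 1 - R.y ⊗ₜ[ℂ] (R.x * R.g) + R.x ⊗ₜ[ℂ] (R.y * R.g)
      + 1 ⊗ₜ[ℂ] (R.y * R.x) := by
  rw [Bialgebra.comul_mul, R.comul_y, R.comul_x]
  simp only [add_mul, mul_add, Algebra.TensorProduct.tmul_mul_tmul, one_mul, mul_one,
    gg R, gx R, TensorProduct.tmul_neg]
  abel

lemma comul_yxg : Coalgebra.comul (R := ℂ) (R.y * (R.x * R.g)) =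
    (R.y * (R.x * R.g)) ⊗ₜ[ℂ] R.g - (R.y * R.g) ⊗ₜ[ℂ] R.x + (R.x * R.g) ⊗ₜ[ℂ] R.y
      + R.g ⊗ₜ[ℂ] (R.y * (R.x * R.g)) := by
  rw [← mul_assoc, Bialgebra.comul_mul, comul_yx R, R.comul_g]
  simp only [add_mul, sub_mul, Algebra.TensorProduct.tmul_mul_tmul, one_mul, mul_one,
    mul_assoc, gg R]

/-- the star map on the tensor square -/
def starT : H ⊗[ℂ] H →+ H ⊗[ℂ] H :=
  TensorProduct.liftAddHom
    (AddMonoidHom.mk'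
      (fun a => AddMonoidHom.mk' (fun b => starFun R A a ⊗ₜ[ℂ] starFun R A b)
        (fun b b' => by simp [starFun_add, TensorProduct.tmul_add]))
      (fun a a' => by ext b; simp [starFun_add, TensorProduct.add_tmul]))
    (fun r a b => by
      simp [starFun_smul, TensorProduct.smul_tmul, TensorProduct.tmul_smul])

lemma starT_tmul (a b : H) :
    starT R A (a ⊗ₜ[ℂ] b) = starFun R A a ⊗ₜ[ℂ] starFun R A b :=
  TensorProduct.liftAddHom_tmul _ _ a b

lemma starT_smul (c : ℂ) (u : H ⊗[ℂ] H) :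
    starT R A (c • u) = (starRingEnd ℂ) c • starT R A u := by
  induction u using TensorProduct.induction_on with
  | zero => simp
  | tmul a b =>
    rw [TensorProduct.smul_tmul', starT_tmul, starT_tmul, starFun_smul,
      TensorProduct.smul_tmul']
  | add u v hu hv => rw [smul_add, map_add, map_add, hu, hv, smul_add]

lemma comul_star (h : H) :
    Coalgebra.comul (R := ℂ) (starFun R A h) = starT R A (Coalgebra.comul (R := ℂ) h) := by
  refine ext_semilinear R (starRingEnd ℂ)
    ((Coalgebra.comul (R := ℂ)).toAddMonoidHom.comp (starHom R A))
    ((starT R A).comp (Coalgebra.comul (R := ℂ) (A := H)).toAddMonoidHom)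
    (fun c h => ?_) (fun c h => ?_) (fun i => ?_) h
  · simp only [AddMonoidHom.comp_apply, LinearMap.toAddMonoidHom_coe, starHom_apply,
      starFun_smul, map_smul]
  · simp only [AddMonoidHom.comp_apply, LinearMap.toAddMonoidHom_coe, map_smul, starT_smul]
  · simp only [AddMonoidHom.comp_apply, LinearMap.toAddMonoidHom_coe, starHom_apply]
    obtain ⟨r, s, l⟩ := i
    fin_cases r <;> fin_cases s <;> fin_cases l <;> rw [R.basis_eq] <;>
      simp only [Fin.isValue, Fin.val_zero, Fin.val_one, pow_zero, pow_one, one_mul, mul_one] <;>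
      simp only [star_one, star_g, star_x, star_y, star_xg, star_yg, star_yx, star_yxg,
        comul_one', comul_xg R, comul_yg R, comul_yx R, comul_yxg R, R.comul_g, R.comul_x,
        R.comul_y, map_add, map_neg, map_smul, map_sub, starT_tmul, starT_smul,
        TensorProduct.tmul_add, TensorProduct.add_tmul, TensorProduct.tmul_neg,
        TensorProduct.neg_tmul, ← TensorProduct.smul_tmul', TensorProduct.tmul_smul,
        TensorProduct.sub_tmul, TensorProduct.tmul_sub, mul_assoc, smul_add, smul_sub,
        smul_neg] <;>
      module

lemma antipode_one' : HopfAlgebra.antipode (R := ℂ) (1 : H) = 1 := by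
  have h := HopfAlgebra.mul_antipode_rTensor_comul_apply (R := ℂ) (a := (1 : H))
  rw [comul_one', LinearMap.rTensor_tmul, LinearMap.mul'_apply, mul_one,
    Bialgebra.counit_one] at h
  rwa [(algebraMap ℂ H).map_one] at h

include R in
lemma antipode_g' : HopfAlgebra.antipode (R := ℂ) R.g = R.g := by
  rw [R.antipode_g]; norm_num

include R in
lemma antipode_x' : HopfAlgebra.antipode (R := ℂ) R.x = -(R.x * R.g) := by
  rw [R.antipode_x]; norm_num

include R in
lemma antipode_y' : HopfAlgebra.antipode (R := ℂ) R.y = -(R.y * R.g) := by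
  rw [R.antipode_y]; norm_num

lemma antipode_xg : HopfAlgebra.antipode (R := ℂ) (R.x * R.g) = R.x := by
  have h := HopfAlgebra.mul_antipode_rTensor_comul_apply (R := ℂ) (a := R.x * R.g)
  rw [comul_xg R] at h
  simp only [map_add, LinearMap.rTensor_tmul, LinearMap.mul'_apply, mul_one, one_mul,
    antipode_g' R, Bialgebra.counit_mul, R.counit_x, R.counit_g, zero_mul, map_zero,
    gx' R, gg R, gx R] at h
  refine eq_of_sub_eq_zero ?_
  rwa [sub_eq_add_neg]

lemma antipode_yg : HopfAlgebra.antipode (R := ℂ) (R.y * R.g) = R.y := by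
  have h := HopfAlgebra.mul_antipode_rTensor_comul_apply (R := ℂ) (a := R.y * R.g)
  rw [comul_yg R] at h
  simp only [map_add, LinearMap.rTensor_tmul, LinearMap.mul'_apply, mul_one, one_mul,
    antipode_g' R, Bialgebra.counit_mul, R.counit_y, R.counit_g, zero_mul, map_zero,
    gy' R, gg R, gy R] at h
  refine eq_of_sub_eq_zero ?_
  rwa [sub_eq_add_neg]

lemma antipode_yx : HopfAlgebra.antipode (R := ℂ) (R.y * R.x) = R.y * R.x := by
  have h := HopfAlgebra.mul_antipode_rTensor_comul_apply (R := ℂ) (a := R.y * R.x)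
  rw [comul_yx R] at h
  simp only [map_add, map_sub, LinearMap.rTensor_tmul, LinearMap.mul'_apply, mul_one, one_mul,
    antipode_one', antipode_g' R, antipode_x' R, antipode_y' R, Bialgebra.counit_mul,
    R.counit_x, R.counit_y, R.counit_g, zero_mul, mul_zero, map_zero, neg_mul, mul_neg, neg_neg,
    mul_assoc, gg R, gg' R, gx R, gx' R, gy R, gy' R, xy R, xy' R, xx R, xx' R, yy R, yy' R] at h
  refine eq_of_sub_eq_zero ?_
  rw [← h]; abel

lemma antipode_yxg :
    HopfAlgebra.antipode (R := ℂ) (R.y * (R.x * R.g)) = R.y * (R.x * R.g) := by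
  have h := HopfAlgebra.mul_antipode_rTensor_comul_apply (R := ℂ) (a := R.y * (R.x * R.g))
  rw [comul_yxg R] at h
  simp only [map_add, map_sub, LinearMap.rTensor_tmul, LinearMap.mul'_apply, mul_one, one_mul,
    antipode_one', antipode_g' R, antipode_x' R, antipode_y' R, antipode_xg R, antipode_yg R,
    antipode_yx R, Bialgebra.counit_mul, R.counit_x, R.counit_y, R.counit_g, zero_mul, mul_zero,
    map_zero, neg_mul, mul_neg, neg_neg, mul_assoc, gg R, gg' R, gx R, gx' R, gy R, gy' R,
    xy R, xy' R, xx R, xx' R, yy R, yy' R] at h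
  have h3 : HopfAlgebra.antipode (R := ℂ) (R.y * (R.x * R.g)) * R.g = R.y * R.x := by
    refine eq_of_sub_eq_zero ?_
    rw [← h]; abel
  have h4 : HopfAlgebra.antipode (R := ℂ) (R.y * (R.x * R.g)) =
      HopfAlgebra.antipode (R := ℂ) (R.y * (R.x * R.g)) * R.g * R.g := by
    rw [mul_assoc, gg R, mul_one]
  rw [h4, h3, mul_assoc]

lemma antipode_star (hA : A.map (starRingEnd ℂ) * A = 1) (h : H) :
    HopfAlgebra.antipode (R := ℂ)
      (starFun R A (HopfAlgebra.antipode (R := ℂ) (starFun R A h))) = h := by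
  obtain ⟨e00, e01, e10, e11⟩ := entries A hA
  have hdet := det_entry A hA
  refine ext_semilinear R (RingHom.id ℂ)
    (((HopfAlgebra.antipode (R := ℂ) (A := H)).toAddMonoidHom.comp (starHom R A)).comp
      ((HopfAlgebra.antipode (R := ℂ) (A := H)).toAddMonoidHom.comp (starHom R A)))
    (AddMonoidHom.id H) (fun c h => ?_) (fun c h => by simp) (fun i => ?_) h
  · simp only [AddMonoidHom.comp_apply, LinearMap.toAddMonoidHom_coe, starHom_apply,
      starFun_smul, map_smul, Complex.conj_conj, RingHom.id_apply]
  · simp only [AddMonoidHom.comp_apply, AddMonoidHom.id_apply, LinearMap.toAddMonoidHom_coe,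
      starHom_apply]
    obtain ⟨r, s, l⟩ := i
    fin_cases r <;> fin_cases s <;> fin_cases l <;> rw [R.basis_eq] <;>
      simp only [Fin.isValue, Fin.val_zero, Fin.val_one, pow_zero, pow_one, one_mul,
        mul_one, mul_assoc] <;>
      simp only [starFun_add, starFun_neg, starFun_smul, star_one, star_g, star_x, star_y,
        star_xg, star_yg, star_yx, star_yxg, map_add, map_neg, map_smul, antipode_one',
        antipode_g' R, antipode_x' R, antipode_y' R, antipode_xg R, antipode_yg R,
        antipode_yx R, antipode_yxg R, smul_smul, smul_neg, neg_neg, smul_add] <;>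
      match_scalars <;>
      first
      | ring1
      | linear_combination e00
      | linear_combination e01
      | linear_combination e10
      | linear_combination e11
      | linear_combination hdet

end RadfordAux
/-- For `n = 2` and `A ∈ M₂(ℂ)` with `Ā A = I₂`, the Radford
algebra `H` admits a `*`-structure with `g* = g`, `x* = a₁₁ x + a₁₂ y`,
`y* = a₂₁ x + a₂₂ y`. -/
theorem radford_star_structure_of_matrix
    {ω : ℂ} {H : Type*} [Ring H] [HopfAlgebra ℂ H]
    (R : RadfordAlgebra 2 ω H) (A : Matrix (Fin 2) (Fin 2) ℂ)
    (hA : A.map (starRingEnd ℂ) * A = 1) :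
    ∃ st : HopfStarStructure H,
      st.star R.g = R.g ∧
        st.star R.x = A 0 0 • R.x + A 0 1 • R.y ∧
        st.star R.y = A 1 0 • R.x + A 1 1 • R.y := by
  exact ⟨{ star := RadfordAux.starFun R A
           star_add := RadfordAux.starFun_add R A
           star_smul := RadfordAux.starFun_smul R A
           star_star := RadfordAux.star_star R A hA
           star_mul := fun a b => RadfordAux.star_antimul R A a b
           starTensor := ⇑(RadfordAux.starT R A)
           starTensor_add := map_add _
           starTensor_tmul := RadfordAux.starT_tmul R A
           comul_star := RadfordAux.comul_star R A
           antipode_star := RadfordAux.antipode_star R A hA },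
        RadfordAux.star_g R A, RadfordAux.star_x R A, RadfordAux.star_y R A⟩
end
end

section
/- For any natural numbers r, s and any integer l, the comultiplication of the Radford algebra satisfies Δ(y^r x^s g^l) = Σ_{i=0}^{r} Σ_{j=0}^{s} ω^{-(r-i)j} · C(r,i)_ω · C(s,j)_{ω^{-1}} · y^{r-i} x^{s-j} g^l ⊗ y^i x^j g^{l+s-j+r-i}, where C(m,k)_q denotes the Gaussian (q-)binomial coefficient. -/
open TensorProduct

noncomputable section

lemma qBinom_zero (q : ℂ) (m : ℕ) : qBinom q m 0 = 1 := by cases m <;> rfl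

lemma qBinom_succ_succ (q : ℂ) (m k : ℕ) :
    qBinom q (m + 1) (k + 1) = qBinom q m k + q ^ (k + 1) * qBinom q m (k + 1) := rfl

lemma qBinom_eq_zero (q : ℂ) : ∀ {m k : ℕ}, m < k → qBinom q m k = 0 := by
  intro m
  induction m with
  | zero => intro k hk; cases k with
    | zero => omega
    | succ k => rfl
  | succ m ih =>
    intro k hk
    cases k with
    | zero => omega
    | succ k =>
      rw [qBinom_succ_succ, ih (by omega), ih (by omega)]
      ring

lemma mul_pow_qcomm {A : Type*} [Ring A] [Algebra ℂ A] {q : ℂ} {a b : A}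
    (h : b * a = q • (a * b)) : ∀ k : ℕ, b * a ^ k = q ^ k • (a ^ k * b) := by
  intro k
  induction k with
  | zero => simp
  | succ k ih =>
    rw [pow_succ, ← mul_assoc, ih, smul_mul_assoc, mul_assoc, h, mul_smul_comm,
      smul_smul, ← pow_succ, pow_succ, mul_assoc]

theorem qbinom_add_pow {A : Type*} [Ring A] [Algebra ℂ A] {q : ℂ} {a b : A}
    (h : b * a = q • (a * b)) (m : ℕ) :
    (a + b) ^ m = ∑ k ∈ Finset.range (m + 1), qBinom q m k • (a ^ k * b ^ (m - k)) := by
  induction m with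
  | zero => simp [qBinom]
  | succ m ih =>
    rw [pow_succ', ih, Finset.mul_sum]
    have step : ∀ k ∈ Finset.range (m + 1),
        (a + b) * (qBinom q m k • (a ^ k * b ^ (m - k))) =
          qBinom q m k • (a ^ (k + 1) * b ^ (m - k)) +
            (q ^ k * qBinom q m k) • (a ^ k * b ^ (m + 1 - k)) := by
      intro k hk
      rw [Finset.mem_range] at hk
      have hb : b ^ (m + 1 - k) = b * b ^ (m - k) := by
        rw [show m + 1 - k = 1 + (m - k) by omega, pow_add, pow_one]
      rw [hb, add_mul, mul_smul_comm, mul_smul_comm, ← mul_assoc, ← pow_succ', ← mul_assoc,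
        mul_pow_qcomm h, smul_mul_assoc, smul_smul, mul_comm (qBinom q m k) (q ^ k), mul_assoc]
    rw [Finset.sum_congr rfl step, Finset.sum_add_distrib]
    -- RHS side
    rw [Finset.sum_range_succ' (fun k => qBinom q (m+1) k • (a ^ k * b ^ (m + 1 - k))) (m+1)]
    have e1 : ∀ k ∈ Finset.range (m + 1),
        qBinom q (m+1) (k+1) • (a ^ (k+1) * b ^ (m + 1 - (k+1))) =
          qBinom q m k • (a ^ (k + 1) * b ^ (m - k)) +
            (q ^ (k+1) * qBinom q m (k+1)) • (a ^ (k+1) * b ^ (m - k)) := by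
      intro k hk
      have hb : m + 1 - (k + 1) = m - k := by omega
      rw [hb, qBinom_succ_succ, add_smul]
    rw [Finset.sum_congr rfl e1, Finset.sum_add_distrib]
    -- now: Σ A + Σ B2 = (Σ A + Σ B1) + b^{m+1}  where B2 over range(m+1) with q^k C(m,k) • a^k b^{m+1-k},
    -- B1 over range(m+1) with q^{k+1} C(m,k+1) • a^{k+1} b^{m-k}
    have e2 : ∑ k ∈ Finset.range (m + 1), (q ^ k * qBinom q m k) • (a ^ k * b ^ (m + 1 - k)) =
        (∑ k ∈ Finset.range (m + 1), (q ^ (k+1) * qBinom q m (k+1)) • (a ^ (k+1) * b ^ (m - k))) + b ^ (m+1) := by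
      rw [Finset.sum_range_succ' (fun k => (q ^ k * qBinom q m k) • (a ^ k * b ^ (m + 1 - k))) m]
      rw [Finset.sum_range_succ (fun k => (q ^ (k+1) * qBinom q m (k+1)) • (a ^ (k+1) * b ^ (m - k))) m]
      rw [qBinom_eq_zero q (by omega : m < m + 1)]
      simp [qBinom_zero]
    rw [e2, qBinom_zero, one_smul, pow_zero, one_mul, Nat.sub_zero, add_assoc]

section AuxRadford

variable {n : ℕ} {ω : ℂ} {H : Type*} [Ring H] [HopfAlgebra ℂ H]

lemma RadfordAlgebra.gx_pow (R : RadfordAlgebra n ω H) (hω0 : ω ≠ 0) :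
    ∀ a b : ℕ, R.g ^ a * R.x ^ b = (ω⁻¹) ^ (a * b) • (R.x ^ b * R.g ^ a) := by
  have hgx : R.g * R.x = ω⁻¹ • (R.x * R.g) := by
    rw [R.rel_xg, smul_smul, inv_mul_cancel₀ hω0, one_smul]
  intro a
  induction a with
  | zero => intro b; simp
  | succ a ih =>
    intro b
    have h1 : R.g * R.x ^ b = (ω⁻¹) ^ b • (R.x ^ b * R.g) := mul_pow_qcomm hgx b
    rw [pow_succ, mul_assoc, h1, mul_smul_comm, ← mul_assoc, ih b, smul_mul_assoc,
      smul_smul, ← pow_add, mul_assoc, ← pow_succ]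
    congr 2
    ring

end AuxRadford

/-- the comultiplication of the monomials `y^r x^s g^l` (with
`l ∈ ℤ`, integer powers of `g` being taken via the unit `u` of `H` with
`u = g`). -/
theorem radford_comul_monomial
    {n : ℕ} {ω : ℂ} {H : Type*} [Ring H] [HopfAlgebra ℂ H]
    (R : RadfordAlgebra n ω H) (u : Hˣ) (hu : (u : H) = R.g) (r s : ℕ) (l : ℤ) :
    Coalgebra.comul (R := ℂ) (R.y ^ r * R.x ^ s * ((u ^ l : Hˣ) : H)) =
      ∑ i ∈ Finset.range (r + 1), ∑ j ∈ Finset.range (s + 1),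
        (ω ^ (-(((r - i) * j : ℕ) : ℤ)) * qBinom ω r i * qBinom ω⁻¹ s j) •
          ((R.y ^ (r - i) * R.x ^ (s - j) * ((u ^ l : Hˣ) : H)) ⊗ₜ[ℂ]
            (R.y ^ i * R.x ^ j *
              ((u ^ (l + ((s - j : ℕ) : ℤ) + ((r - i : ℕ) : ℤ)) : Hˣ) : H))) := by
  classical
  have hω0 : ω ≠ 0 := R.hω.ne_zero (by have := R.hn; omega)
  set φ : H →ₐ[ℂ] (H ⊗[ℂ] H) := Bialgebra.comulAlgHom ℂ H with hφdef
  have hφ : ∀ h : H, Coalgebra.comul (R := ℂ) h = φ h := fun h => rfl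
  set G : H := ((u ^ l : Hˣ) : H) with hG
  have hgn : ∀ c : ℕ, R.g ^ c = ((u ^ (c : ℤ) : Hˣ) : H) := by
    intro c
    rw [zpow_natCast, ← hu, ← Units.val_pow_eq_pow_val]
  -- comul of the unit power
  have hGG : φ G = G ⊗ₜ[ℂ] G := by
    set fl : H →* H ⊗[ℂ] H :=
      ((Algebra.TensorProduct.includeLeft : H →ₐ[ℂ] H ⊗[ℂ] H) : H →* H ⊗[ℂ] H) with hfl
    set fr : H →* H ⊗[ℂ] H :=
      ((Algebra.TensorProduct.includeRight : H →ₐ[ℂ] H ⊗[ℂ] H) : H →* H ⊗[ℂ] H) with hfr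
    set fc : H →* H ⊗[ℂ] H := (φ : H →* H ⊗[ℂ] H) with hfc
    set wl : (H ⊗[ℂ] H)ˣ := Units.map fl u with hwl
    set wr : (H ⊗[ℂ] H)ˣ := Units.map fr u with hwr
    set w : (H ⊗[ℂ] H)ˣ := Units.map fc u with hw
    have hcomm : wl * wr = wr * wl := by
      apply Units.ext
      show ((u : H) ⊗ₜ[ℂ] (1 : H)) * ((1 : H) ⊗ₜ[ℂ] (u : H)) =
        ((1 : H) ⊗ₜ[ℂ] (u : H)) * ((u : H) ⊗ₜ[ℂ] (1 : H))
      rw [Algebra.TensorProduct.tmul_mul_tmul, Algebra.TensorProduct.tmul_mul_tmul,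
        mul_one, one_mul]
    have hwval : w = wl * wr := by
      apply Units.ext
      show φ (u : H) = ((u : H) ⊗ₜ[ℂ] (1 : H)) * ((1 : H) ⊗ₜ[ℂ] (u : H))
      rw [Algebra.TensorProduct.tmul_mul_tmul, mul_one, one_mul, hu, ← hφ, R.comul_g]
    have h1 : φ G = ((w ^ l : (H ⊗[ℂ] H)ˣ) : H ⊗[ℂ] H) := by
      rw [hG, ← map_zpow (Units.map fc) u l]
      rfl
    have h2 : (w ^ l : (H ⊗[ℂ] H)ˣ) = wl ^ l * wr ^ l := by
      rw [hwval]
      exact Commute.mul_zpow hcomm l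
    have h3 : ((wl ^ l : (H ⊗[ℂ] H)ˣ) : H ⊗[ℂ] H) = G ⊗ₜ[ℂ] (1 : H) := by
      rw [← map_zpow (Units.map fl) u l]
      rfl
    have h4 : ((wr ^ l : (H ⊗[ℂ] H)ˣ) : H ⊗[ℂ] H) = (1 : H) ⊗ₜ[ℂ] G := by
      rw [← map_zpow (Units.map fr) u l]
      rfl
    rw [h1, h2, Units.val_mul, h3, h4, Algebra.TensorProduct.tmul_mul_tmul, mul_one, one_mul]
  -- expansion of comul y ^ r
  have hY : (φ R.y) ^ r = ∑ i ∈ Finset.range (r + 1),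
      qBinom ω r i • ((R.y ^ (r - i)) ⊗ₜ[ℂ] (R.y ^ i * R.g ^ (r - i))) := by
    have hq : ((R.y ⊗ₜ[ℂ] R.g : H ⊗[ℂ] H)) * ((1 : H) ⊗ₜ[ℂ] R.y) =
        ω • (((1 : H) ⊗ₜ[ℂ] R.y) * (R.y ⊗ₜ[ℂ] R.g)) := by
      rw [Algebra.TensorProduct.tmul_mul_tmul, Algebra.TensorProduct.tmul_mul_tmul,
        mul_one, one_mul, R.rel_gy, tmul_smul]
    have hcy : φ R.y = ((1 : H) ⊗ₜ[ℂ] R.y) + (R.y ⊗ₜ[ℂ] R.g : H ⊗[ℂ] H) := by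
      rw [← hφ, R.comul_y, add_comm]
    rw [hcy, qbinom_add_pow hq r]
    refine Finset.sum_congr rfl fun i hi => ?_
    congr 1
    rw [Algebra.TensorProduct.tmul_pow, Algebra.TensorProduct.tmul_pow,
      Algebra.TensorProduct.tmul_mul_tmul, one_pow, one_mul]
  -- expansion of comul x ^ s
  have hX : (φ R.x) ^ s = ∑ j ∈ Finset.range (s + 1),
      qBinom ω⁻¹ s j • ((R.x ^ (s - j)) ⊗ₜ[ℂ] (R.x ^ j * R.g ^ (s - j))) := by
    have hq : ((R.x ⊗ₜ[ℂ] R.g : H ⊗[ℂ] H)) * ((1 : H) ⊗ₜ[ℂ] R.x) =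
        ω⁻¹ • (((1 : H) ⊗ₜ[ℂ] R.x) * (R.x ⊗ₜ[ℂ] R.g)) := by
      rw [Algebra.TensorProduct.tmul_mul_tmul, Algebra.TensorProduct.tmul_mul_tmul,
        mul_one, one_mul]
      have hgx : R.g * R.x = ω⁻¹ • (R.x * R.g) := by
        rw [R.rel_xg, smul_smul, inv_mul_cancel₀ hω0, one_smul]
      rw [hgx, tmul_smul]
    have hcx : φ R.x = ((1 : H) ⊗ₜ[ℂ] R.x) + (R.x ⊗ₜ[ℂ] R.g : H ⊗[ℂ] H) := by
      rw [← hφ, R.comul_x, add_comm]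
    rw [hcx, qbinom_add_pow hq s]
    refine Finset.sum_congr rfl fun j hj => ?_
    congr 1
    rw [Algebra.TensorProduct.tmul_pow, Algebra.TensorProduct.tmul_pow,
      Algebra.TensorProduct.tmul_mul_tmul, one_pow, one_mul]
  -- put it together
  rw [hφ, map_mul, map_mul, map_pow, map_pow, hY, hX, hGG,
    Finset.sum_mul_sum, Finset.sum_mul]
  refine Finset.sum_congr rfl fun i hi => ?_
  rw [Finset.sum_mul]
  refine Finset.sum_congr rfl fun j hj => ?_
  rw [Finset.mem_range] at hi hj
  -- per-term computation
  have hgg : R.g ^ (r - i) * (R.g ^ (s - j) * G) =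
      ((u ^ (l + ((s - j : ℕ) : ℤ) + ((r - i : ℕ) : ℤ)) : Hˣ) : H) := by
    rw [hgn, hgn, hG, ← Units.val_mul, ← Units.val_mul, ← zpow_add, ← zpow_add]
    have e : ((r - i : ℕ) : ℤ) + (((s - j : ℕ) : ℤ) + l) =
        l + ((s - j : ℕ) : ℤ) + ((r - i : ℕ) : ℤ) := by ring
    rw [e]
  have hrt : (R.y ^ i * R.g ^ (r - i)) * (R.x ^ j * R.g ^ (s - j)) * G =
      (ω⁻¹) ^ ((r - i) * j) •
        (R.y ^ i * R.x ^ j *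
          ((u ^ (l + ((s - j : ℕ) : ℤ) + ((r - i : ℕ) : ℤ)) : Hˣ) : H)) := by
    have e : (R.y ^ i * R.g ^ (r - i)) * (R.x ^ j * R.g ^ (s - j)) * G =
        R.y ^ i * ((R.g ^ (r - i) * R.x ^ j) * (R.g ^ (s - j) * G)) := by
      simp only [mul_assoc]
    rw [e, R.gx_pow hω0 (r - i) j, smul_mul_assoc, mul_smul_comm]
    congr 1
    have e2 : R.y ^ i * ((R.x ^ j * R.g ^ (r - i)) * (R.g ^ (s - j) * G)) =
        R.y ^ i * R.x ^ j * (R.g ^ (r - i) * (R.g ^ (s - j) * G)) := by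
      simp only [mul_assoc]
    rw [e2, hgg]
  rw [smul_mul_assoc, mul_smul_comm, smul_mul_assoc, smul_mul_assoc, smul_smul,
    Algebra.TensorProduct.tmul_mul_tmul, Algebra.TensorProduct.tmul_mul_tmul, hrt,
    tmul_smul, smul_smul]
  congr 1
  have hneg : ω ^ (-(((r - i) * j : ℕ) : ℤ)) = (ω⁻¹) ^ ((r - i) * j) := by
    rw [zpow_neg, ← inv_zpow, zpow_natCast]
  rw [hneg]
  ring
end
end
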